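/- arXiv:1906.03991 — 3 statements merged into one kernel-verified Lean document; each statement's English description precedes it below -/
import Mathlib

section
/- Let T be a semistandard Young tableau over {1,...,n} and let k, m ∈ {1,...,n} with k ≤ m. Then the maximum length of a weakly increasing-through-the-chain scattered subword of the column reading of T that can be read from the set {1,...,k} to the set {m−k+1,...,m} equals the total number of entries from {1,...,m} lying in the bottom k rows of T. -/
/-- The `i`-th smallest element (0-indexed) of a finite set of naturals
(`0` if `i` is out of range). -/
def nthEl (S : Finset ℕ) (i : ℕ) : ℕ := (S.sort (· ≤ ·)).getD i 0

/-- The order on subsets of equal cardinality: `S ≤ T` iff `|S| = |T|` and the `i`-th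
smallest element of `S` is at most that of `T`, for all `i`. -/
def FLE (S T : Finset ℕ) : Prop :=
  S.card = T.card ∧ ∀ i < T.card, nthEl S i ≤ nthEl T i

/-- The general order: `S ≤ T` iff `|S| ≥ |T|` and the `i`-th smallest element of `S`
is at most that of `T` for all `i < |T|`. -/
def GLE (S T : Finset ℕ) : Prop :=
  T.card ≤ S.card ∧ ∀ i < T.card, nthEl S i ≤ nthEl T i

/-- A word `w` over `{1,…,n}` is readable from `P` to `Q` if there is a chain
`P ≤ S₁ ≤ … ≤ S_{|w|} ≤ Q` of subsets of `{1,…,n}` with `wᵢ ∈ Sᵢ` for each `i`. -/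
def Readable (n : ℕ) (w : List ℕ) (P Q : Finset ℕ) : Prop :=
  ∃ L : List (Finset ℕ), L.length = w.length ∧ (∀ A ∈ L, A ⊆ Finset.Icc 1 n) ∧
    List.Chain' FLE (P :: (L ++ [Q])) ∧
    ∀ i (h : i < w.length), w.get ⟨i, h⟩ ∈ L.getD i ∅

/-- Tropical (max-plus) product of matrices indexed by subsets of `{1,…,n}`. -/
noncomputable def tmul (n : ℕ) (A B : Finset ℕ → Finset ℕ → WithBot ℝ) :
    Finset ℕ → Finset ℕ → WithBot ℝ :=
  fun P Q => ((Finset.Icc 1 n).powerset).sup fun R => A P R + B R Q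

open Classical in
/-- The image of a generator `x ∈ {1,…,n}` under `ρₙ`. -/
noncomputable def rhoGen (n : ℕ) (x : ℕ) (P Q : Finset ℕ) : WithBot ℝ :=
  if FLE P Q then
    (if ∃ S : Finset ℕ, S ⊆ Finset.Icc 1 n ∧ FLE P S ∧ FLE S Q ∧ x ∈ S then 1 else 0)
  else ⊥

open Classical in
/-- The image of a word under `ρₙ`, extended multiplicatively (the empty word maps to the
matrix with `0` in positions `(P,Q)` with `P ≤ Q` and `-∞` elsewhere). -/
noncomputable def rhoW (n : ℕ) : List ℕ → Finset ℕ → Finset ℕ → WithBot ℝ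
  | [] => fun P Q => if FLE P Q then 0 else ⊥
  | x :: w => tmul n (rhoGen n x) (rhoW n w)

/-- The Knuth relations over `{1,…,n}`. -/
inductive KnuthRel (n : ℕ) : List ℕ → List ℕ → Prop
  | k1 (a b c : ℕ) (h1 : 1 ≤ a) (h2 : a < b) (h3 : b ≤ c) (h4 : c ≤ n) :
      KnuthRel n [b, c, a] [b, a, c]
  | k2 (a b c : ℕ) (h1 : 1 ≤ a) (h2 : a ≤ b) (h3 : b < c) (h4 : c ≤ n) :
      KnuthRel n [c, a, b] [a, c, b]

/-- The plactic congruence on words: the equivalence generated by applying Knuth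
relations inside words. Two words are related iff they represent the same element of
the plactic monoid of rank `n`. -/
def PlacticRel (n : ℕ) : List ℕ → List ℕ → Prop :=
  Relation.EqvGen fun w v => ∃ p s x y, KnuthRel n x y ∧ w = p ++ x ++ s ∧ v = p ++ y ++ s

/-- A semistandard Young tableau over `{1,…,n}`, given by its list of rows
(row 0 is the bottom row): entries lie in `{1,…,n}`, rows weakly increase left to right,
row lengths weakly decrease going up, columns strictly increase going up
(i.e. strictly decrease reading down). -/
structure Tableau (n : ℕ) where
  rows : List (List ℕ)
  entries_mem : ∀ r ∈ rows, ∀ x ∈ r, x ∈ Finset.Icc 1 n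
  row_weak : ∀ r ∈ rows, List.Pairwise (· ≤ ·) r
  shape : ∀ i, (rows.getD (i + 1) []).length ≤ (rows.getD i []).length
  col_strict : ∀ i j, j < (rows.getD (i + 1) []).length →
    (rows.getD i []).getD j 0 < (rows.getD (i + 1) []).getD j 0

/-- The number of occurrences of the symbol `y` in row `x` (rows numbered from 1, from
the bottom) of the tableau `T`. -/
def rowCount {n : ℕ} (T : Tableau n) (x y : ℕ) : ℕ := (T.rows.getD (x - 1) []).count y

/-- The row reading of a tableau: rows read left to right, from top row to bottom row. -/
def rowReading {n : ℕ} (T : Tableau n) : List ℕ := T.rows.reverse.flatten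

/-- The `j`-th column of a tableau, read from top to bottom. -/
def colOf {n : ℕ} (T : Tableau n) (j : ℕ) : List ℕ :=
  ((List.range T.rows.length).reverse).filterMap fun i => (T.rows.getD i [])[j]?

/-- The column reading of a tableau: columns read top to bottom, left to right. -/
def colReading {n : ℕ} (T : Tableau n) : List ℕ :=
  ((List.range ((T.rows.getD 0 []).length)).map (colOf T)).flatten

/-- The `(k,m)`-completion of `S ⊆ {1,…,m}`: adjoin to `S` the `k - |S|` largest
elements of `{1,…,m} \ S`. -/
def completion (k m : ℕ) (S : Finset ℕ) : Finset ℕ :=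
  S ∪ ((((Finset.Icc 1 m) \ S).sort (· ≤ ·)).reverse.take (k - S.card)).toFinset

/-- Tropical (max-plus) product of `n × n` matrices over `ℝ ∪ {-∞}`. -/
noncomputable def tmulF (n : ℕ) (A B : Fin n → Fin n → WithBot ℝ) :
    Fin n → Fin n → WithBot ℝ :=
  fun i j => Finset.univ.sup fun k => A i k + B k j

/-- The tropical identity matrix. -/
noncomputable def tIdF (n : ℕ) : Fin n → Fin n → WithBot ℝ :=
  fun i j => if i = j then (0 : WithBot ℝ) else ⊥

namespace Stmt10
open List

lemma down_trans {q : ℕ → Bool} {h : ℕ} (hq : ∀ i, i + 1 < h → q (i+1) = true → q i = true) :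
    ∀ {i j : ℕ}, i ≤ j → j < h → q j = true → q i = true := by
  intro i j hij
  induction hij with
  | refl => intro _ hj; exact hj
  | @step jm hm ih => intro hjh hj; exact ih (by omega) (hq _ hjh hj)

lemma filter_range_eq {q : ℕ → Bool} : ∀ {h : ℕ},
    (∀ i, i + 1 < h → q (i+1) = true → q i = true) →
    (List.range h).filter q = List.range ((List.range h).countP q) := by
  intro h
  induction h with
  | zero => intro _; simp
  | succ h ih =>
    intro hq
    have hq' : ∀ i, i + 1 < h → q (i+1) = true → q i = true := fun i hi => hq i (by omega)
    rw [List.range_succ, List.filter_append, List.countP_append, ih hq']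
    by_cases hh : q h = true
    · have hall : ∀ a ∈ List.range h, q a = true := by
        intro a ha
        rw [List.mem_range] at ha
        exact down_trans (h := h + 1) hq (Nat.le_of_lt ha) (Nat.lt_succ_self h) hh
      have hcnt : (List.range h).countP q = h := by
        rw [List.countP_eq_length.2 hall, List.length_range]
      simp [hh, hcnt, List.range_succ]
    · simp only [Bool.not_eq_true] at hh
      simp [hh]

lemma mem_filter_range {q : ℕ → Bool} {h : ℕ}
    (hq : ∀ i, i + 1 < h → q (i+1) = true → q i = true) (i : ℕ) :
    i < (List.range h).countP q ↔ (i < h ∧ q i = true) := by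
  have heq := filter_range_eq hq
  constructor
  · intro hi
    have : i ∈ (List.range h).filter q := by rw [heq]; exact List.mem_range.2 hi
    simp only [List.mem_filter, List.mem_range] at this; exact this
  · intro ⟨h1, h2⟩
    have : i ∈ (List.range h).filter q := List.mem_filter.2 ⟨List.mem_range.2 h1, h2⟩
    rw [heq, List.mem_range] at this; exact this

lemma eq_of_lt_iff {a b : ℕ} (h : ∀ i, i < a ↔ i < b) : a = b := by
  rcases Nat.lt_trichotomy a b with h' | h' | h'
  · exact absurd ((h a).2 h') (lt_irrefl a)
  · exact h'
  · exact absurd ((h b).1 h') (lt_irrefl b)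

lemma sorted_getElem_le_iff {l : List ℕ} (hl : l.Pairwise (· ≤ ·)) {s : ℕ} (hs : s < l.length)
    (c : ℕ) : l[s] ≤ c ↔ s < l.countP (fun x => decide (x ≤ c)) := by
  have hmono : ∀ i j (hi : i < l.length) (hj : j < l.length), i ≤ j → l[i] ≤ l[j] := by
    intro i j hi hj hij
    rcases Nat.lt_or_ge i j with h' | h'
    · exact List.pairwise_iff_getElem.1 hl i j hi hj h'
    · have : i = j := le_antisymm hij h'
      subst this; exact le_rfl
  constructor
  · intro hc
    have h1 : (l.take (s+1)).countP (fun x => decide (x ≤ c)) = s + 1 := by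
      rw [List.countP_eq_length.2, List.length_take]
      · omega
      · intro a ha
        obtain ⟨i, hi, rfl⟩ := List.mem_iff_getElem.1 ha
        rw [List.length_take] at hi
        rw [List.getElem_take]
        simp only [decide_eq_true_eq]
        exact le_trans (hmono i s (by omega) hs (by omega)) hc
    calc s < s + 1 := Nat.lt_succ_self s
    _ = (l.take (s+1)).countP (fun x => decide (x ≤ c)) := h1.symm
    _ ≤ l.countP (fun x => decide (x ≤ c)) := (List.take_sublist _ _).countP_le
  · intro hc
    by_contra hcon
    push_neg at hcon
    have hsplit : l.countP (fun x => decide (x ≤ c)) =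
        (l.take s).countP (fun x => decide (x ≤ c)) + (l.drop s).countP (fun x => decide (x ≤ c)) := by
      conv_lhs => rw [← List.take_append_drop s l]
      rw [List.countP_append]
    have h2 : (l.drop s).countP (fun x => decide (x ≤ c)) = 0 := by
      rw [List.countP_eq_zero]
      intro a ha
      obtain ⟨i, hi, rfl⟩ := List.mem_iff_getElem.1 ha
      have hi' : s + i < l.length := by rw [List.length_drop] at hi; omega
      rw [List.getElem_drop (h := hi)]
      simp only [decide_eq_true_eq, not_le]
      have : l[s] ≤ l[s+i]'hi' := hmono s (s+i) hs hi' (by omega)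
      omega
    have h3 : (l.take s).countP (fun x => decide (x ≤ c)) ≤ s := by
      calc (l.take s).countP _ ≤ (l.take s).length := List.countP_le_length
      _ ≤ s := by rw [List.length_take]; omega
    omega


/-- number of elements of `S` that are `≤ c` -/
def cnt (S : Finset ℕ) (c : ℕ) : ℕ := (S.filter (fun x => x ≤ c)).card

lemma cnt_eq_countP (S : Finset ℕ) (c : ℕ) :
    cnt S c = (S.sort (· ≤ ·)).countP (fun x => decide (x ≤ c)) := by
  unfold cnt
  have h1 : (Finset.filter (fun x => x ≤ c) S).val = S.val.filter (fun x => x ≤ c) :=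
    Finset.filter_val _ _
  rw [Finset.card_def, h1, ← Multiset.countP_eq_card_filter]
  conv_lhs => rw [← Finset.sort_eq S (· ≤ ·)]
  rw [Multiset.coe_countP]

lemma cnt_le_card (S : Finset ℕ) (c : ℕ) : cnt S c ≤ S.card :=
  Finset.card_filter_le _ _

lemma nthEl_le_iff {S : Finset ℕ} {i : ℕ} (h : i < S.card) (c : ℕ) :
    nthEl S i ≤ c ↔ i < cnt S c := by
  have hlen : i < (S.sort (· ≤ ·)).length := by rw [Finset.length_sort]; exact h
  have : nthEl S i = (S.sort (· ≤ ·))[i] := List.getD_eq_getElem _ _ hlen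
  rw [this, cnt_eq_countP]
  exact sorted_getElem_le_iff (Finset.pairwise_sort _ _) hlen c

lemma cnt_le_of_FLE {S T : Finset ℕ} (h : FLE S T) (c : ℕ) : cnt T c ≤ cnt S c := by
  obtain ⟨hcard, hle⟩ := h
  by_cases h0 : cnt T c = 0
  · omega
  have h1 : cnt T c - 1 < cnt T c := by omega
  have h2 : cnt T c - 1 < T.card := lt_of_lt_of_le h1 (cnt_le_card T c)
  have h3 : nthEl T (cnt T c - 1) ≤ c := (nthEl_le_iff h2 c).2 h1
  have h4 : nthEl S (cnt T c - 1) ≤ c := le_trans (hle _ h2) h3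
  have h5 : cnt T c - 1 < cnt S c := (nthEl_le_iff (by omega) c).1 h4
  omega

lemma FLE_of_cnt {S T : Finset ℕ} (hc : S.card = T.card) (h : ∀ c, cnt T c ≤ cnt S c) :
    FLE S T := by
  refine ⟨hc, fun i hi => ?_⟩
  have h1 : i < cnt T (nthEl T i) := (nthEl_le_iff hi _).1 (le_refl (nthEl T i))
  exact (nthEl_le_iff (by omega) _).2 (lt_of_lt_of_le h1 (h _))

lemma FLE_refl (S : Finset ℕ) : FLE S S := ⟨rfl, fun _ _ => le_rfl⟩

lemma FLE_trans {S T U : Finset ℕ} (h1 : FLE S T) (h2 : FLE T U) : FLE S U :=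
  FLE_of_cnt (h1.1.trans h2.1)
    (fun c => le_trans (cnt_le_of_FLE h2 c) (cnt_le_of_FLE h1 c))

lemma cnt_mono_subset {S T : Finset ℕ} (h : S ⊆ T) (c : ℕ) : cnt S c ≤ cnt T c :=
  Finset.card_le_card (Finset.filter_subset_filter _ h)

lemma cnt_eq_card_of {S : Finset ℕ} {c : ℕ} (h : ∀ x ∈ S, x ≤ c) : cnt S c = S.card := by
  unfold cnt; rw [Finset.filter_true_of_mem h]

lemma le_of_cnt_eq_card {S : Finset ℕ} {c : ℕ} (h : S.card ≤ cnt S c) : ∀ x ∈ S, x ≤ c := by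
  have := Finset.eq_of_subset_of_card_le (Finset.filter_subset (fun x => x ≤ c) S) h
  intro x hx
  rw [← this] at hx
  exact (Finset.mem_filter.1 hx).2

lemma cnt_ge {S : Finset ℕ} {m : ℕ} (hS : S ⊆ Finset.Icc 1 m) (c : ℕ) :
    S.card - (m - c) ≤ cnt S c := by
  have hsplit := Finset.card_filter_add_card_filter_not (s := S) (p := fun x => x ≤ c)
  have h2 : (S.filter (fun x => ¬ x ≤ c)).card ≤ m - c := by
    have hsub : S.filter (fun x => ¬ x ≤ c) ⊆ Finset.Icc (c+1) m := by
      intro x hx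
      rw [Finset.mem_filter] at hx
      have := hS hx.1
      rw [Finset.mem_Icc] at *
      omega
    calc (S.filter (fun x => ¬ x ≤ c)).card ≤ (Finset.Icc (c+1) m).card := Finset.card_le_card hsub
    _ = m - c := by rw [Nat.card_Icc]; omega
  unfold cnt
  omega

lemma card_Icc_nat (a b : ℕ) : (Finset.Icc a b).card = b + 1 - a := Nat.card_Icc a b

lemma FLE_P {n k : ℕ} {S : Finset ℕ} (hS : S ⊆ Finset.Icc 1 n) (hcard : S.card = k) :
    FLE (Finset.Icc 1 k) S := by
  apply FLE_of_cnt
  · rw [card_Icc_nat, hcard]; omega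
  · intro c
    have h1 : cnt S c ≤ c := by
      have hsub : S.filter (fun x => x ≤ c) ⊆ Finset.Icc 1 c := by
        intro x hx
        rw [Finset.mem_filter] at hx
        have := hS hx.1
        rw [Finset.mem_Icc] at *
        omega
      calc cnt S c ≤ (Finset.Icc 1 c).card := Finset.card_le_card hsub
      _ = c := by rw [card_Icc_nat]; omega
    have h2 : cnt S c ≤ k := hcard ▸ cnt_le_card S c
    have h3 : cnt (Finset.Icc 1 k) c = min k c := by
      unfold cnt
      have : (Finset.Icc 1 k).filter (fun x => x ≤ c) = Finset.Icc 1 (min k c) := by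
        ext x; simp only [Finset.mem_filter, Finset.mem_Icc]; omega
      rw [this, card_Icc_nat]; omega
    omega

lemma FLE_Q {k m : ℕ} {S : Finset ℕ} (hS : S ⊆ Finset.Icc 1 m) (hcard : S.card = k)
    (hkm : k ≤ m) : FLE S (Finset.Icc (m - k + 1) m) := by
  apply FLE_of_cnt
  · rw [card_Icc_nat, hcard]; omega
  · intro c
    have h1 : cnt (Finset.Icc (m-k+1) m) c ≤ (Finset.Icc (m-k+1) (min c m)).card := by
      apply Finset.card_le_card
      intro x hx
      rw [Finset.mem_filter] at hx
      rw [Finset.mem_Icc] at *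
      omega
    rw [card_Icc_nat] at h1
    have h2 : S.card - (m - c) ≤ cnt S c := cnt_ge hS c
    omega


section Completion

variable {k m : ℕ} {S : Finset ℕ}

lemma tk_subset (x : ℕ)
    (hx : x ∈ (((Finset.Icc 1 m) \ S).sort (· ≤ ·)).reverse.take (k - S.card)) :
    x ∈ Finset.Icc 1 m \ S := by
  have h1 : x ∈ (((Finset.Icc 1 m) \ S).sort (· ≤ ·)).reverse :=
    (List.take_sublist _ _).mem hx
  rw [List.mem_reverse] at h1
  exact (Finset.mem_sort _).1 h1

lemma subset_completion : S ⊆ completion k m S := Finset.subset_union_left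

lemma completion_subset (hS : S ⊆ Finset.Icc 1 m) : completion k m S ⊆ Finset.Icc 1 m := by
  apply Finset.union_subset hS
  intro x hx
  rw [List.mem_toFinset] at hx
  exact (Finset.mem_sdiff.1 (tk_subset x hx)).1

lemma card_completion (hS : S ⊆ Finset.Icc 1 m) (hk : S.card ≤ k) (hkm : k ≤ m) :
    (completion k m S).card = k := by
  set tk := (((Finset.Icc 1 m) \ S).sort (· ≤ ·)).reverse.take (k - S.card) with htk
  have hnd : tk.Nodup :=
    (List.take_sublist _ _).nodup (List.nodup_reverse.2 (Finset.sort_nodup _ _))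
  have hdisj : Disjoint S tk.toFinset := by
    rw [Finset.disjoint_left]
    intro x hxS hxT
    rw [List.mem_toFinset] at hxT
    exact (Finset.mem_sdiff.1 (tk_subset x hxT)).2 hxS
  have hcard : tk.toFinset.card = k - S.card := by
    rw [List.toFinset_card_of_nodup hnd, htk, List.length_take, List.length_reverse,
      Finset.length_sort, Finset.card_sdiff_of_subset hS, Nat.card_Icc]
    omega
  rw [completion, Finset.card_union_of_disjoint hdisj, hcard]
  omega

lemma take_mem_of_gt : ∀ {rl : List ℕ} {d x y : ℕ}, rl.Pairwise (· > ·) →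
    y ∈ rl.take d → x ∈ rl → y < x → x ∈ rl.take d := by
  intro rl
  induction rl with
  | nil => intro d x y _ _ hx; cases hx
  | cons a tl ih =>
    intro d x y hp hy hx hxy
    cases d with
    | zero => simp at hy
    | succ d =>
      rw [List.take_succ_cons] at hy ⊢
      rcases List.mem_cons.1 hx with rfl | hx'
      · exact List.mem_cons_self
      · rcases List.mem_cons.1 hy with rfl | hy'
        · have : y > x := (List.pairwise_cons.1 hp).1 x hx'
          omega
        · exact List.mem_cons_of_mem _
            (ih (List.pairwise_cons.1 hp).2 hy' hx' hxy)

lemma cnt_completion_le (hS : S ⊆ Finset.Icc 1 m) (hk : S.card ≤ k) (hkm : k ≤ m) (c : ℕ) :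
    cnt (completion k m S) c ≤ max (cnt S c) (k - (m - c)) := by
  by_cases hcase : cnt (completion k m S) c ≤ cnt S c
  · exact le_trans hcase (le_max_left _ _)
  push_neg at hcase
  set tk := (((Finset.Icc 1 m) \ S).sort (· ≤ ·)).reverse.take (k - S.card) with htk
  -- find y ∈ tk with y ≤ c
  have hy : ∃ y ∈ tk, y ≤ c := by
    by_contra hno
    push_neg at hno
    have hsub : (completion k m S).filter (fun x => x ≤ c) ⊆ S.filter (fun x => x ≤ c) := by
      intro x hx
      rw [Finset.mem_filter] at hx ⊢
      refine ⟨?_, hx.2⟩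
      rcases Finset.mem_union.1 hx.1 with h | h
      · exact h
      · rw [List.mem_toFinset] at h
        have := hno x h; omega
    exact absurd (Finset.card_le_card hsub) (not_le.2 hcase)
  obtain ⟨y, hytk, hyc⟩ := hy
  -- Icc (c+1) m ⊆ completion
  have hIcc : Finset.Icc (c+1) m ⊆ completion k m S := by
    intro x hx
    rw [Finset.mem_Icc] at hx
    by_cases hxS : x ∈ S
    · exact subset_completion hxS
    have hxR : x ∈ Finset.Icc 1 m \ S := by
      rw [Finset.mem_sdiff, Finset.mem_Icc]; exact ⟨⟨by omega, hx.2⟩, hxS⟩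
    have hxrl : x ∈ (((Finset.Icc 1 m) \ S).sort (· ≤ ·)).reverse := by
      rw [List.mem_reverse]; exact (Finset.mem_sort _).2 hxR
    have hpair : ((((Finset.Icc 1 m) \ S).sort (· ≤ ·)).reverse).Pairwise (· > ·) :=
      List.pairwise_reverse.2 ((List.pairwise_and_iff.2 ⟨Finset.pairwise_sort _ (· ≤ ·), Finset.sort_nodup _ _⟩).imp fun h => lt_of_le_of_ne h.1 h.2)
    have : x ∈ tk := take_mem_of_gt hpair hytk hxrl (by omega)
    exact Finset.mem_union_right _ (List.mem_toFinset.2 this)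
  have hcomp_card : (completion k m S).card = k := card_completion hS hk hkm
  have hsplit := Finset.card_filter_add_card_filter_not
    (s := completion k m S) (p := fun x => x ≤ c)
  have h2 : m - c ≤ ((completion k m S).filter (fun x => ¬ x ≤ c)).card := by
    have hsub2 : Finset.Icc (c+1) m ⊆ (completion k m S).filter (fun x => ¬ x ≤ c) := by
      intro x hx
      have hx' := hx
      rw [Finset.mem_Icc] at hx'
      rw [Finset.mem_filter]
      exact ⟨hIcc hx, by omega⟩
    calc m - c = (Finset.Icc (c+1) m).card := by rw [Nat.card_Icc]; omega
    _ ≤ _ := Finset.card_le_card hsub2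
  refine le_trans ?_ (le_max_right _ _)
  unfold cnt at *
  omega

lemma FLE_completion {A B : Finset ℕ} (hA : A ⊆ Finset.Icc 1 m) (hB : B ⊆ Finset.Icc 1 m)
    (hAk : A.card ≤ k) (hBk : B.card ≤ k) (hkm : k ≤ m)
    (h : ∀ c, cnt B c ≤ cnt A c) : FLE (completion k m A) (completion k m B) := by
  apply FLE_of_cnt
  · rw [card_completion hA hAk hkm, card_completion hB hBk hkm]
  · intro c
    refine le_trans (cnt_completion_le hB hBk hkm c) (max_le ?_ ?_)
    · exact le_trans (h c) (cnt_mono_subset subset_completion c)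
    · have := cnt_ge (completion_subset (k := k) hA) c
      rw [card_completion hA hAk hkm] at this
      exact this

end Completion

lemma sum_map_range (f : ℕ → ℕ) : ∀ (N : ℕ),
    ((List.range N).map f).sum = ∑ i ∈ Finset.range N, f i := by
  intro N
  induction N with
  | zero => simp
  | succ N ih => rw [List.range_succ, List.map_append, List.sum_append, Finset.sum_range_succ, ih]; simp

lemma countP_flatten (p : ℕ → Bool) : ∀ (l : List (List ℕ)),
    l.flatten.countP p = (l.map (fun s => s.countP p)).sum := by
  intro l
  induction l with
  | nil => simp
  | cons a l ih => rw [List.flatten_cons, List.countP_append, ih]; simp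

lemma getD_range_map (l : List ℕ) : (List.range l.length).map (fun j => l.getD j 0) = l := by
  apply List.ext_getElem
  · simp
  · intro i h1 h2
    simp only [List.getElem_map, List.getElem_range]
    exact List.getD_eq_getElem l 0 h2

lemma countP_eq_range (p : ℕ → Bool) (l : List ℕ) :
    l.countP p = (List.range l.length).countP (fun j => p (l.getD j 0)) := by
  conv_lhs => rw [← getD_range_map l]
  rw [List.countP_map]
  rfl

lemma countP_range_eq_card (q : ℕ → Prop) [DecidablePred q] (M : ℕ) :
    (List.range M).countP (fun i => decide (q i)) = ((Finset.range M).filter q).card := by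
  rw [Finset.card_def, Finset.filter_val, Finset.range_val]
  show _ = Multiset.card (Multiset.filter q (Multiset.range M))
  rw [← Multiset.countP_eq_card_filter]
  show _ = Multiset.countP q ↑(List.range M)
  rw [Multiset.coe_countP]


variable {n : ℕ}

def row (T : Tableau n) (i : ℕ) : List ℕ := T.rows.getD i []
def ent (T : Tableau n) (i j : ℕ) : ℕ := (row T i).getD j 0
def hgt (T : Tableau n) (j : ℕ) : ℕ :=
  (List.range T.rows.length).countP fun i => decide (j < (row T i).length)

lemma rowlen_anti (T : Tableau n) : ∀ {i i' : ℕ}, i ≤ i' →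
    (row T i').length ≤ (row T i).length := by
  intro i i' h
  induction h with
  | refl => exact le_rfl
  | @step i'' h ih => exact le_trans (T.shape i'') ih

lemma lt_hgt_iff (T : Tableau n) {i j : ℕ} :
    i < hgt T j ↔ i < T.rows.length ∧ j < (row T i).length := by
  unfold hgt
  rw [mem_filter_range]
  · simp
  · intro i' _ h
    simp only [decide_eq_true_eq] at h ⊢
    exact lt_of_lt_of_le h (rowlen_anti T (Nat.le_succ i'))

lemma hgt_le (T : Tableau n) (j : ℕ) : hgt T j ≤ T.rows.length := by
  unfold hgt
  calc (List.range T.rows.length).countP _ ≤ (List.range T.rows.length).length :=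
    List.countP_le_length
  _ = T.rows.length := List.length_range

lemma row_mem (T : Tableau n) {i : ℕ} (h : i < T.rows.length) : row T i ∈ T.rows := by
  rw [row, List.getD_eq_getElem _ _ h]; exact List.getElem_mem _

lemma row_sorted (T : Tableau n) (i : ℕ) : (row T i).Pairwise (· ≤ ·) := by
  rcases Nat.lt_or_ge i T.rows.length with h | h
  · exact T.row_weak _ (row_mem T h)
  · rw [row, List.getD_eq_default _ _ h]; exact List.Pairwise.nil

lemma sorted_le_getElem {l : List ℕ} (hl : l.Pairwise (· ≤ ·)) {i j : ℕ} (hij : i ≤ j)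
    (hj : j < l.length) : l[i]'(by omega) ≤ l[j] := by
  rcases Nat.lt_or_ge i j with h | h
  · exact List.pairwise_iff_getElem.1 hl i j (by omega) hj h
  · have : i = j := by omega
    subst this; exact le_rfl

lemma ent_mem (T : Tableau n) {i j : ℕ} (hi : i < T.rows.length)
    (hj : j < (row T i).length) : ent T i j ∈ Finset.Icc 1 n := by
  rw [ent, List.getD_eq_getElem _ _ hj]
  exact T.entries_mem _ (row_mem T hi) _ (List.getElem_mem _)

lemma ent_row_mono (T : Tableau n) {i j j' : ℕ} (h : j ≤ j') (hj' : j' < (row T i).length) :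
    ent T i j ≤ ent T i j' := by
  rw [ent, ent, List.getD_eq_getElem _ _ hj', List.getD_eq_getElem _ _ (by omega)]
  exact sorted_le_getElem (row_sorted T i) h hj'

lemma ent_col_succ (T : Tableau n) {i j : ℕ} (h : i + 1 < hgt T j) :
    ent T i j < ent T (i+1) j :=
  T.col_strict i j ((lt_hgt_iff T).1 h).2

lemma ent_col_mono (T : Tableau n) {j : ℕ} : ∀ {i i' : ℕ}, i ≤ i' → i' < hgt T j →
    ent T i j ≤ ent T i' j := by
  intro i i' h
  induction h with
  | refl => intro _; exact le_rfl
  | @step i'' h ih =>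
    intro hlt
    exact le_trans (ih (by omega)) (le_of_lt (ent_col_succ T hlt))

lemma ent_col_strict (T : Tableau n) {j i i' : ℕ} (h : i < i') (h' : i' < hgt T j) :
    ent T i j < ent T i' j := by
  have h1 : ent T i j ≤ ent T (i'-1) j := ent_col_mono T (by omega) (by omega)
  have h2 : ent T (i'-1) j < ent T (i'-1+1) j := ent_col_succ T (by omega)
  have : i' - 1 + 1 = i' := by omega
  rw [this] at h2
  omega

lemma colOf_eq (T : Tableau n) (j : ℕ) :
    colOf T j = ((List.range (hgt T j)).map fun i => ent T i j).reverse := by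
  unfold colOf
  rw [List.filterMap_reverse]
  congr 1
  have key : ∀ M, (List.range M).filterMap (fun i => (T.rows.getD i [])[j]?)
      = (List.range (min (hgt T j) M)).map fun i => ent T i j := by
    intro M
    induction M with
    | zero => simp
    | succ M ih =>
      rw [List.range_succ, List.filterMap_append, ih]
      by_cases hM : j < (row T M).length
      · have hMR : M < T.rows.length := by
          by_contra hc
          push_neg at hc
          rw [row, List.getD_eq_default _ _ hc] at hM
          simp at hM
        have hMh : M < hgt T j := (lt_hgt_iff T).2 ⟨hMR, hM⟩
        have hf : (T.rows.getD M [])[j]? = some (ent T M j) := by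
          show (row T M)[j]? = _
          rw [List.getElem?_eq_getElem hM, ent,
            List.getD_eq_getElem _ _ hM]
        have h1 : min (hgt T j) (M+1) = M + 1 := by omega
        have h2 : min (hgt T j) M = M := by omega
        rw [h1, h2, List.range_succ, List.map_append, List.filterMap_cons, hf]
        simp
      · have hMh : hgt T j ≤ M := by
          by_contra hc
          push_neg at hc
          exact hM ((lt_hgt_iff T).1 hc).2
        have hf : (T.rows.getD M [])[j]? = none := by
          show (row T M)[j]? = _
          rw [List.getElem?_eq_none (by omega)]
        have h1 : min (hgt T j) (M+1) = hgt T j := by omega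
        have h2 : min (hgt T j) M = hgt T j := by omega
        rw [h1, h2, List.filterMap_cons, hf]
        simp
  rw [key T.rows.length, min_eq_left (hgt_le T j)]

lemma colOf_length (T : Tableau n) (j : ℕ) : (colOf T j).length = hgt T j := by
  rw [colOf_eq]; simp

lemma colOf_sorted (T : Tableau n) (j : ℕ) : (colOf T j).Pairwise (· > ·) := by
  rw [colOf_eq]
  apply List.pairwise_reverse.2
  rw [List.pairwise_map]
  apply List.pairwise_iff_getElem.2
  intro a b ha hb hab
  simp only [List.getElem_range]
  rw [List.length_range] at ha hb
  exact ent_col_strict T (by simpa using hab) (by simpa using hb)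

def dcol (T : Tableau n) (m j : ℕ) : ℕ :=
  (List.range (hgt T j)).countP fun i => decide (ent T i j ≤ m)
def tcol (T : Tableau n) (k m j : ℕ) : ℕ := min (dcol T m j) k
def sel (T : Tableau n) (k m j : ℕ) : List ℕ :=
  ((colOf T j).filter (fun x => decide (x ≤ m))).drop (dcol T m j - k)

lemma dcol_downward (T : Tableau n) (m j : ℕ) :
    ∀ i, i + 1 < hgt T j → decide (ent T (i+1) j ≤ m) = true → decide (ent T i j ≤ m) = true := by
  intro i hi h
  simp only [decide_eq_true_eq] at h ⊢
  exact le_trans (le_of_lt (ent_col_succ T hi)) h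

lemma lt_dcol_iff (T : Tableau n) {m j i : ℕ} :
    i < dcol T m j ↔ i < hgt T j ∧ ent T i j ≤ m := by
  unfold dcol
  rw [mem_filter_range (dcol_downward T m j)]
  simp

lemma dcol_le_hgt (T : Tableau n) (m j : ℕ) : dcol T m j ≤ hgt T j := by
  unfold dcol
  calc (List.range (hgt T j)).countP _ ≤ (List.range (hgt T j)).length := List.countP_le_length
  _ = _ := List.length_range

lemma countP_colOf (T : Tableau n) (m j : ℕ) :
    (colOf T j).countP (fun x => decide (x ≤ m)) = dcol T m j := by
  rw [colOf_eq, List.countP_reverse, List.countP_map]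
  rfl

lemma filter_colOf (T : Tableau n) (m j : ℕ) :
    (colOf T j).filter (fun x => decide (x ≤ m))
      = ((List.range (dcol T m j)).map fun i => ent T i j).reverse := by
  rw [colOf_eq, List.filter_reverse, List.filter_map]
  congr 1
  have : (List.range (hgt T j)).filter ((fun x => decide (x ≤ m)) ∘ fun i => ent T i j)
      = List.range (dcol T m j) := by
    rw [filter_range_eq (dcol_downward T m j)]
    rfl
  rw [this]

lemma sel_eq (T : Tableau n) (k m j : ℕ) :
    sel T k m j = ((List.range (tcol T k m j)).map fun i => ent T i j).reverse := by
  rw [sel, filter_colOf]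
  have harith : dcol T m j - k = ((List.range (dcol T m j)).map fun i => ent T i j).length
      - tcol T k m j := by
    simp only [List.length_map, List.length_range, tcol]
    omega
  rw [harith, ← List.reverse_take]
  congr 1
  rw [← List.map_take, List.take_range]
  congr 2
  simp only [tcol]
  omega

lemma sel_length (T : Tableau n) (k m j : ℕ) : (sel T k m j).length = tcol T k m j := by
  rw [sel_eq]; simp

lemma sel_sublist (T : Tableau n) (k m j : ℕ) : (sel T k m j).Sublist (colOf T j) :=
  (List.drop_sublist _ _).trans List.filter_sublist

def selF (T : Tableau n) (k m j : ℕ) : Finset ℕ := (sel T k m j).toFinset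

lemma sort_selF (T : Tableau n) (k m j : ℕ) :
    (selF T k m j).sort (· ≤ ·) = (List.range (tcol T k m j)).map fun i => ent T i j := by
  unfold selF
  rw [sel_eq, List.toFinset_reverse]
  have hnd : ((List.range (tcol T k m j)).map fun i => ent T i j).Nodup := by
    apply List.Pairwise.imp (fun {a b} (h : a < b) => ne_of_lt h)
    rw [List.pairwise_map]
    apply List.pairwise_iff_getElem.2
    intro a b ha hb hab
    rw [List.length_range] at ha hb
    simp only [List.getElem_range]
    exact ent_col_strict T hab (lt_of_lt_of_le hb (le_trans (min_le_left _ _) (dcol_le_hgt T m j)))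
  refine (List.toFinset_sort (· ≤ ·) hnd).2 ?_
  apply List.Pairwise.imp (fun {a b} (h : a < b) => le_of_lt h)
  rw [List.pairwise_map]
  apply List.pairwise_iff_getElem.2
  intro a b ha hb hab
  rw [List.length_range] at ha hb
  simp only [List.getElem_range]
  exact ent_col_strict T hab (lt_of_lt_of_le hb (le_trans (min_le_left _ _) (dcol_le_hgt T m j)))

lemma card_selF (T : Tableau n) (k m j : ℕ) : (selF T k m j).card = tcol T k m j := by
  rw [← Finset.length_sort (· ≤ ·), sort_selF]; simp

lemma nthEl_selF (T : Tableau n) {k m j i : ℕ} (hi : i < tcol T k m j) :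
    nthEl (selF T k m j) i = ent T i j := by
  unfold nthEl
  rw [sort_selF]
  rw [List.getD_eq_getElem _ _ (by simp; omega)]
  simp

lemma cnt_selF (T : Tableau n) (k m j : ℕ) (c : ℕ) :
    cnt (selF T k m j) c = (List.range (tcol T k m j)).countP fun i => decide (ent T i j ≤ c) := by
  rw [cnt_eq_countP, sort_selF, List.countP_map]
  rfl

lemma mem_selF (T : Tableau n) {k m j : ℕ} {x : ℕ} (hx : x ∈ selF T k m j) :
    ∃ i < tcol T k m j, x = ent T i j := by
  have : x ∈ (selF T k m j).sort (· ≤ ·) := (Finset.mem_sort _).2 hx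
  rw [sort_selF] at this
  obtain ⟨i, hi, rfl⟩ := List.mem_map.1 this
  exact ⟨i, List.mem_range.1 hi, rfl⟩

lemma selF_subset (T : Tableau n) (k m j : ℕ) : selF T k m j ⊆ Finset.Icc 1 m := by
  intro x hx
  obtain ⟨i, hi, rfl⟩ := mem_selF T hx
  have hid : i < dcol T m j := lt_of_lt_of_le hi (min_le_left _ _)
  have hih : i < hgt T j := lt_of_lt_of_le hid (dcol_le_hgt T m j)
  have h1 := ent_mem T ((lt_hgt_iff T).1 hih).1 ((lt_hgt_iff T).1 hih).2
  have h2 : ent T i j ≤ m := ((lt_dcol_iff T).1 hid).2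
  rw [Finset.mem_Icc] at h1 ⊢
  omega

lemma hgt_anti (T : Tableau n) (j : ℕ) : hgt T (j+1) ≤ hgt T j := by
  by_contra hc
  push_neg at hc
  have h1 := (lt_hgt_iff T (i := hgt T j) (j := j+1)).1 hc
  have h2 : ¬ (hgt T j < hgt T j) := lt_irrefl _
  exact h2 ((lt_hgt_iff T).2 ⟨h1.1, by omega⟩)

lemma ent_right_mono (T : Tableau n) {i j : ℕ} (h : i < hgt T (j+1)) :
    ent T i j ≤ ent T i (j+1) := by
  have h1 := (lt_hgt_iff T).1 h
  exact ent_row_mono T (Nat.le_succ j) h1.2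

lemma dcol_anti (T : Tableau n) (m j : ℕ) : dcol T m (j+1) ≤ dcol T m j := by
  unfold dcol
  calc (List.range (hgt T (j+1))).countP (fun i => decide (ent T i (j+1) ≤ m))
      ≤ (List.range (hgt T (j+1))).countP (fun i => decide (ent T i j ≤ m)) := by
        apply List.countP_mono_left
        intro i hi hp
        rw [List.mem_range] at hi
        simp only [decide_eq_true_eq] at hp ⊢
        exact le_trans (ent_right_mono T hi) hp
    _ ≤ (List.range (hgt T j)).countP (fun i => decide (ent T i j ≤ m)) :=
        (List.range_sublist.2 (hgt_anti T j)).countP_le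

lemma tcol_anti (T : Tableau n) (k m j : ℕ) : tcol T k m (j+1) ≤ tcol T k m j := by
  unfold tcol
  have := dcol_anti T m j
  omega

lemma cnt_selF_anti (T : Tableau n) (k m j : ℕ) (c : ℕ) :
    cnt (selF T k m (j+1)) c ≤ cnt (selF T k m j) c := by
  rw [cnt_selF, cnt_selF]
  calc (List.range (tcol T k m (j+1))).countP (fun i => decide (ent T i (j+1) ≤ c))
      ≤ (List.range (tcol T k m (j+1))).countP (fun i => decide (ent T i j ≤ c)) := by
        apply List.countP_mono_left
        intro i hi hp
        rw [List.mem_range] at hi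
        simp only [decide_eq_true_eq] at hp ⊢
        refine le_trans (ent_right_mono T ?_) hp
        calc i < tcol T k m (j+1) := hi
        _ ≤ dcol T m (j+1) := min_le_left _ _
        _ ≤ hgt T (j+1) := dcol_le_hgt T m (j+1)
    _ ≤ _ := (List.range_sublist.2 (tcol_anti T k m j)).countP_le


lemma lt_tcol_iff (T : Tableau n) {k m j i : ℕ} :
    i < tcol T k m j ↔ i < k ∧ i < hgt T j ∧ ent T i j ≤ m := by
  unfold tcol
  have h := lt_dcol_iff T (m := m) (j := j) (i := i)
  omega

lemma tcol_eq_card (T : Tableau n) (k m j : ℕ) :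
    tcol T k m j = ((Finset.range (min k T.rows.length)).filter
      (fun i => i < hgt T j ∧ ent T i j ≤ m)).card := by
  rw [← countP_range_eq_card]
  apply eq_of_lt_iff
  intro i
  have hdown : ∀ i', i' + 1 < min k T.rows.length →
      (fun i => decide (i < hgt T j ∧ ent T i j ≤ m)) (i'+1) = true →
      (fun i => decide (i < hgt T j ∧ ent T i j ≤ m)) i' = true := by
    intro i' hi' h
    simp only [decide_eq_true_eq] at h ⊢
    exact ⟨by omega, le_trans (le_of_lt (ent_col_succ T (by omega))) h.2⟩
  rw [mem_filter_range hdown]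
  simp only [decide_eq_true_eq]
  have h1 := lt_tcol_iff T (k := k) (m := m) (j := j) (i := i)
  have h2 : i < hgt T j → i < T.rows.length := fun h => ((lt_hgt_iff T).1 h).1
  constructor
  · intro h
    have := h1.1 h
    exact ⟨by omega, this.2.1, this.2.2⟩
  · rintro ⟨ha, hb, hc⟩
    exact h1.2 ⟨by omega, hb, hc⟩

lemma countP_row_eq_card (T : Tableau n) (m : ℕ) (i : ℕ) :
    (row T i).countP (fun x => decide (x ≤ m))
      = ((Finset.range ((row T 0).length)).filter
          (fun j => j < (row T i).length ∧ ent T i j ≤ m)).card := by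
  have hlen : (row T i).length ≤ (row T 0).length := rowlen_anti T (Nat.zero_le i)
  rw [countP_eq_range, ← countP_range_eq_card]
  have hsplit : List.range ((row T 0).length)
      = List.range ((row T i).length) ++ (List.range ((row T 0).length)).drop ((row T i).length) := by
    conv_lhs => rw [← List.take_append_drop ((row T i).length) (List.range ((row T 0).length))]
    rw [List.take_range, min_eq_left hlen]
  rw [hsplit, List.countP_append]
  have hzero : ((List.range ((row T 0).length)).drop ((row T i).length)).countP
      (fun j => decide (j < (row T i).length ∧ ent T i j ≤ m)) = 0 := by
    rw [List.countP_eq_zero]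
    intro a ha
    obtain ⟨t, ht, rfl⟩ := List.mem_iff_getElem.1 ha
    have hlt : (row T i).length + t < (row T 0).length := by
      rw [List.length_drop, List.length_range] at ht
      omega
    rw [List.getElem_drop (h := ht)]
    simp only [List.getElem_range, decide_eq_true_eq]
    omega
  rw [hzero, Nat.add_zero]
  apply List.countP_congr
  intro a ha
  rw [List.mem_range] at ha
  simp only [ent, decide_eq_true_eq]
  simp [ha]

lemma count_take_eq_sum (T : Tableau n) (k m : ℕ) :
    ((T.rows.take k).flatten.countP fun x => decide (x ≤ m))
      = ∑ j ∈ Finset.range ((row T 0).length), tcol T k m j := by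
  have htake : T.rows.take k = (List.range (min k T.rows.length)).map (fun i => row T i) := by
    apply List.ext_getElem
    · simp
    · intro i h1 h2
      simp only [List.getElem_map, List.getElem_range, List.getElem_take]
      have hiR : i < T.rows.length := by
        simp only [List.length_map, List.length_range] at h2
        omega
      rw [row, List.getD_eq_getElem _ _ hiR]
  rw [htake, countP_flatten, List.map_map, sum_map_range]
  simp only [Function.comp]
  rw [Finset.sum_congr rfl (fun i _ => countP_row_eq_card T m i)]
  rw [Finset.sum_congr rfl (fun j _ => tcol_eq_card T k m j)]
  simp only [Finset.card_filter]
  rw [Finset.sum_comm]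
  apply Finset.sum_congr rfl
  intro a ha
  apply Finset.sum_congr rfl
  intro b hb
  rw [Finset.mem_range] at ha hb
  apply if_congr _ rfl rfl
  constructor
  · rintro ⟨h1, h2⟩
    exact ⟨(lt_hgt_iff T).2 ⟨by omega, h1⟩, h2⟩
  · rintro ⟨h1, h2⟩
    exact ⟨((lt_hgt_iff T).1 h1).2, h2⟩


lemma forall2_of_getD {w : List ℕ} {L : List (Finset ℕ)} (hlen : L.length = w.length)
    (h : ∀ i (hi : i < w.length), w.get ⟨i, hi⟩ ∈ L.getD i ∅) :
    List.Forall₂ (· ∈ ·) w L := by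
  rw [List.forall₂_iff_get]
  refine ⟨hlen.symm, fun i h1 h2 => ?_⟩
  have := h i h1
  rwa [List.getD_eq_getElem _ _ h2] at this

lemma getD_of_forall2 {w : List ℕ} {L : List (Finset ℕ)}
    (h : List.Forall₂ (· ∈ ·) w L) :
    ∀ i (hi : i < w.length), w.get ⟨i, hi⟩ ∈ L.getD i ∅ := by
  intro i hi
  obtain ⟨hlen, hg⟩ := List.forall₂_iff_get.1 h
  have hi2 : i < L.length := by omega
  rw [List.getD_eq_getElem _ _ hi2]
  exact hg i hi hi2

lemma flatten_sublist : ∀ {l₁ l₂ : List (List ℕ)}, List.Forall₂ List.Sublist l₁ l₂ →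
    l₁.flatten.Sublist l₂.flatten := by
  intro l₁ l₂ h
  induction h with
  | nil => exact List.Sublist.refl _
  | cons h _ ih => exact List.Sublist.append h ih

lemma forall2_flatten {r : ℕ → Finset ℕ → Prop} :
    ∀ {l₁ : List (List ℕ)} {l₂ : List (List (Finset ℕ))},
    List.Forall₂ (List.Forall₂ r) l₁ l₂ → List.Forall₂ r l₁.flatten l₂.flatten := by
  intro l₁ l₂ h
  induction h with
  | nil => exact List.Forall₂.nil
  | cons h _ ih => exact List.rel_append h ih

lemma forall2_replicate {l : List ℕ} {C : Finset ℕ} (h : ∀ x ∈ l, x ∈ C) :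
    List.Forall₂ (· ∈ ·) l (List.replicate l.length C) := by
  induction l with
  | nil => exact List.Forall₂.nil
  | cons a l ih =>
    rw [List.length_cons, List.replicate_succ]
    exact List.Forall₂.cons (h a (List.mem_cons_self))
      (ih fun x hx => h x (List.mem_cons_of_mem _ hx))

lemma chain'_replicate_of_refl {R : Finset ℕ → Finset ℕ → Prop} {C : Finset ℕ}
    (h : R C C) : ∀ t, List.Chain' R (List.replicate t C) := by
  intro t
  induction t with
  | zero => exact List.isChain_nil
  | succ t ih =>
    rw [List.replicate_succ]
    exact List.isChain_cons.2 ⟨fun y hy => by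
      cases t with
      | zero => simp at hy
      | succ t => rw [List.replicate_succ, List.head?_cons, Option.mem_some_iff] at hy; subst hy; exact h, ih⟩

lemma head?_replicate {C : Finset ℕ} {t : ℕ} (h : t ≠ 0) :
    (List.replicate t C).head? = some C := by
  cases t with
  | zero => omega
  | succ t => rw [List.replicate_succ, List.head?_cons]

lemma getLast?_replicate {C : Finset ℕ} : ∀ {t : ℕ}, t ≠ 0 →
    (List.replicate t C).getLast? = some C := by
  intro t
  induction t with
  | zero => omega
  | succ t ih =>
    intro _
    cases t with
    | zero => rfl
    | succ t =>
      rw [List.replicate_succ, List.getLast?_cons, ih (by omega)]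
      simp [List.replicate_succ]

lemma chain_tail_last {Q : Finset ℕ} : ∀ (l : List (Finset ℕ)),
    List.Chain' FLE (l ++ [Q]) → ∀ x ∈ l, FLE x Q := by
  intro l
  induction l with
  | nil => intro _ x hx; cases hx
  | cons a l ih =>
    intro hc x hx
    rw [List.cons_append] at hc
    have h1 := List.isChain_cons.1 hc
    rcases List.mem_cons.1 hx with rfl | hx'
    · cases l with
      | nil => exact h1.1 Q rfl
      | cons b l' => exact FLE_trans (h1.1 b rfl) (ih h1.2 b (List.mem_cons_self))
    · exact ih h1.2 x hx'

lemma mem_left_forall2 {u : List ℕ} {L : List (Finset ℕ)} {a : ℕ}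
    (h : List.Forall₂ (· ∈ ·) u L) (ha : a ∈ u) : ∃ B ∈ L, a ∈ B := by
  induction h with
  | nil => cases ha
  | cons h _ ih =>
    rcases List.mem_cons.1 ha with rfl | ha'
    · exact ⟨_, List.mem_cons_self, h⟩
    · obtain ⟨B, hB, haB⟩ := ih ha'
      exact ⟨B, List.mem_cons_of_mem _ hB, haB⟩

lemma chain_len_le {k : ℕ} : ∀ (w : List ℕ) (L : List (Finset ℕ)) (x : ℕ) (S : Finset ℕ),
    List.Forall₂ (· ∈ ·) (x :: w) (S :: L) → (x :: w).Pairwise (· > ·) →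
    List.Chain' FLE (S :: L) → (∀ A ∈ S :: L, A.card = k) →
    w.length + 1 ≤ cnt S x := by
  intro w
  induction w with
  | nil =>
    intro L x S hf _ _ _
    have hx : x ∈ S := (List.forall₂_cons.1 hf).1
    have : x ∈ S.filter (fun y => y ≤ x) := Finset.mem_filter.2 ⟨hx, le_rfl⟩
    have := Finset.card_pos.2 ⟨x, this⟩
    simpa [cnt] using this
  | cons x' w' ih =>
    intro L x S hf hs hc hcard
    have hx : x ∈ S := (List.forall₂_cons.1 hf).1
    have hf2 := (List.forall₂_cons.1 hf).2
    cases L with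
    | nil => exact absurd hf2 (by intro h; cases h)
    | cons S' L' =>
      have hxx' : x' < x := (List.pairwise_cons.1 hs).1 x' (List.mem_cons_self)
      have hFLE : FLE S S' := (List.isChain_cons_cons.1 hc).1
      have hih : w'.length + 1 ≤ cnt S' x' :=
        ih L' x' S' hf2 (List.pairwise_cons.1 hs).2 (List.isChain_cons_cons.1 hc).2
          (fun A hA => hcard A (List.mem_cons_of_mem _ hA))
      have h1 : cnt S' x' ≤ cnt S x' := cnt_le_of_FLE hFLE x'
      have h2 : cnt S x' + 1 ≤ cnt S x := by
        have hsub : insert x (S.filter (fun y => y ≤ x')) ⊆ S.filter (fun y => y ≤ x) := by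
          intro y hy
          rcases Finset.mem_insert.1 hy with rfl | hy'
          · exact Finset.mem_filter.2 ⟨hx, le_rfl⟩
          · have := Finset.mem_filter.1 hy'
            exact Finset.mem_filter.2 ⟨this.1, by omega⟩
        have hnotmem : x ∉ S.filter (fun y => y ≤ x') := by
          intro hmem
          have := (Finset.mem_filter.1 hmem).2
          omega
        calc cnt S x' + 1 = (insert x (S.filter (fun y => y ≤ x'))).card := by
              rw [Finset.card_insert_of_notMem hnotmem]; rfl
        _ ≤ _ := Finset.card_le_card hsub
      calc (x' :: w').length + 1 = w'.length + 2 := by simp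
      _ ≤ cnt S' x' + 1 := by omega
      _ ≤ cnt S x' + 1 := by omega
      _ ≤ cnt S x := h2


lemma col_bound {k m : ℕ} (c u : List ℕ) (L : List (Finset ℕ))
    (hcol : c.Pairwise (· > ·)) (hu : u.Sublist c)
    (hf : List.Forall₂ (· ∈ ·) u L) (hchain : List.Chain' FLE L)
    (hcard : ∀ A ∈ L, A.card = k) (hm : ∀ A ∈ L, ∀ x ∈ A, x ≤ m) :
    u.length ≤ min k (c.countP (fun x => decide (x ≤ m))) := by
  cases u with
  | nil => simp
  | cons x u' =>
    cases L with
    | nil => exact absurd hf (by intro h; cases h)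
    | cons S L' =>
      refine le_min ?_ ?_
      · have h1 : u'.length + 1 ≤ cnt S x :=
          chain_len_le (x :: u').tail (S :: L').tail x S hf (hcol.sublist hu) hchain hcard
        have h2 : cnt S x ≤ S.card := Finset.card_filter_le _ _
        have h3 : S.card = k := hcard S (List.mem_cons_self)
        simp only [List.length_cons]
        omega
      · have hall : ∀ y ∈ x :: u', decide (y ≤ m) = true := by
          intro y hy
          obtain ⟨B, hB, hyB⟩ := mem_left_forall2 hf hy
          simp only [decide_eq_true_eq]
          exact hm B hB y hyB
        have : (x :: u').filter (fun y => decide (y ≤ m)) = x :: u' :=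
          List.filter_eq_self.2 hall
        calc (x :: u').length = ((x :: u').filter (fun y => decide (y ≤ m))).length := by rw [this]
        _ ≤ (c.filter (fun y => decide (y ≤ m))).length :=
            (hu.filter (fun y => decide (y ≤ m))).length_le
        _ = c.countP (fun y => decide (y ≤ m)) := List.countP_eq_length_filter.symm

lemma ub_core {k m : ℕ} : ∀ (cs : List (List ℕ)) (u : List ℕ) (L : List (Finset ℕ)),
    (∀ c ∈ cs, c.Pairwise (· > ·)) → u.Sublist cs.flatten → List.Forall₂ (· ∈ ·) u L →
    List.Chain' FLE L → (∀ A ∈ L, A.card = k) → (∀ A ∈ L, ∀ x ∈ A, x ≤ m) →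
    u.length ≤ (cs.map (fun c => min k (c.countP (fun x => decide (x ≤ m))))).sum := by
  intro cs
  induction cs with
  | nil =>
    intro u L _ hu _ _ _ _
    rw [List.flatten_nil, List.sublist_nil] at hu
    simp [hu]
  | cons c cs ih =>
    intro u L hsort hu hf hchain hcard hm
    rw [List.flatten_cons] at hu
    obtain ⟨u1, u2, rfl, h1, h2⟩ := List.sublist_append_iff.1 hu
    have hf' : List.Forall₂ (fun (A : Finset ℕ) (x : ℕ) => x ∈ A) L (u1 ++ u2) :=
      List.Forall₂.flip hf
    have hfa : List.Forall₂ (· ∈ ·) u1 (L.take u1.length) :=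
      List.Forall₂.flip (List.forall₂_take_append L u1 u2 hf')
    have hfb : List.Forall₂ (· ∈ ·) u2 (L.drop u1.length) :=
      List.Forall₂.flip (List.forall₂_drop_append L u1 u2 hf')
    have hLsplit : L = L.take u1.length ++ L.drop u1.length := (List.take_append_drop _ _).symm
    have hchain2 := hLsplit ▸ hchain
    have hch := List.isChain_append.1 hchain2
    have hb1 : u1.length ≤ min k (c.countP (fun x => decide (x ≤ m))) :=
      col_bound c u1 (L.take u1.length) (hsort c (List.mem_cons_self)) h1 hfa hch.1
        (fun A hA => hcard A (hLsplit ▸ List.mem_append_left _ hA))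
        (fun A hA => hm A (hLsplit ▸ List.mem_append_left _ hA))
    have hb2 := ih u2 (L.drop u1.length) (fun c' hc' => hsort c' (List.mem_cons_of_mem _ hc'))
      h2 hfb hch.2.1
      (fun A hA => hcard A (hLsplit ▸ List.mem_append_right _ hA))
      (fun A hA => hm A (hLsplit ▸ List.mem_append_right _ hA))
    rw [List.map_cons, List.sum_cons, List.length_append]
    omega


lemma ent0_le_iff (T : Tableau n) {m j : ℕ} (hj : j < (row T 0).length) :
    ent T 0 j ≤ m ↔ j < (row T 0).countP (fun x => decide (x ≤ m)) := by
  have h := sorted_getElem_le_iff (row_sorted T 0) (s := j) hj m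
  rw [ent, List.getD_eq_getElem _ _ hj]
  exact h

lemma tcol_pos (T : Tableau n) {k m j : ℕ} (hk : 1 ≤ k)
    (hj : j < (row T 0).countP (fun x => decide (x ≤ m))) : 1 ≤ tcol T k m j := by
  have hjW : j < (row T 0).length := lt_of_lt_of_le hj (List.countP_le_length)
  have hR : 0 < T.rows.length := by
    by_contra h
    push_neg at h
    have hrow : row T 0 = [] := by rw [row, List.getD_eq_default]; omega
    rw [hrow] at hjW
    simp at hjW
  have hhgt : 0 < hgt T j := (lt_hgt_iff T).2 ⟨hR, hjW⟩
  have hent : ent T 0 j ≤ m := (ent0_le_iff T hjW).2 hj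
  have hd : 0 < dcol T m j := (lt_dcol_iff T).2 ⟨hhgt, hent⟩
  unfold tcol
  omega

lemma tcol_zero (T : Tableau n) (k : ℕ) {m j : ℕ}
    (hj : (row T 0).countP (fun x => decide (x ≤ m)) ≤ j) : tcol T k m j = 0 := by
  have hd : dcol T m j = 0 := by
    by_contra h
    have h0 : 0 < dcol T m j := by omega
    have h1 := (lt_dcol_iff T).1 h0
    have hjW : j < (row T 0).length := ((lt_hgt_iff T).1 h1.1).2
    have := (ent0_le_iff T hjW).1 h1.2
    omega
  unfold tcol
  omega

lemma existence (T : Tableau n) {k m : ℕ} (hk : 1 ≤ k) (hkm : k ≤ m) (hm : m ≤ n) :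
    ∃ u : List ℕ, u.Sublist (colReading T) ∧
      Readable n u (Finset.Icc 1 k) (Finset.Icc (m - k + 1) m) ∧
      u.length = ((T.rows.take k).flatten.countP fun x => decide (x ≤ m)) := by
  classical
  have hJW : (row T 0).countP (fun x => decide (x ≤ m)) ≤ (row T 0).length :=
    List.countP_le_length
  refine ⟨((List.range ((row T 0).length)).map fun j => sel T k m j).flatten, ?_, ?_, ?_⟩
  · -- sublist
    show List.Sublist _ (((List.range ((row T 0).length)).map (colOf T)).flatten)
    apply flatten_sublist
    rw [List.forall₂_iff_get]
    refine ⟨by simp, fun i h1 h2 => ?_⟩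
    simp only [List.get_eq_getElem, List.getElem_map, List.getElem_range]
    exact sel_sublist T k m _
  · -- Readable
    have hsplit : ((List.range ((row T 0).length)).map fun j => sel T k m j).flatten
        = ((List.range ((row T 0).countP (fun x => decide (x ≤ m)))).map fun j => sel T k m j).flatten := by
      conv_lhs => rw [← List.take_append_drop ((row T 0).countP (fun x => decide (x ≤ m)))
        (List.range ((row T 0).length)), List.take_range, min_eq_left hJW]
      rw [List.map_append, List.flatten_append]
      have hnil : (((List.range ((row T 0).length)).drop
          ((row T 0).countP (fun x => decide (x ≤ m)))).map fun j => sel T k m j).flatten = [] := by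
        rw [List.flatten_eq_nil_iff]
        intro l hl
        obtain ⟨j, hj, rfl⟩ := List.mem_map.1 hl
        obtain ⟨t, ht, rfl⟩ := List.mem_iff_getElem.1 hj
        rw [List.getElem_drop (h := ht), List.getElem_range]
        have htc : tcol T k m ((row T 0).countP (fun x => decide (x ≤ m)) + t) = 0 :=
          tcol_zero T k (by omega)
        have hlen := sel_length T k m ((row T 0).countP (fun x => decide (x ≤ m)) + t)
        rw [htc] at hlen
        exact List.length_eq_zero_iff.1 hlen
      rw [hnil, List.append_nil]
    have hcardC : ∀ j, (completion k m (selF T k m j)).card = k := fun j =>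
      card_completion (selF_subset T k m j) (by rw [card_selF]; exact min_le_right _ _) hkm
    have hsubC : ∀ j, completion k m (selF T k m j) ⊆ Finset.Icc 1 m := fun j =>
      completion_subset (selF_subset T k m j)
    have hsubCn : ∀ j, completion k m (selF T k m j) ⊆ Finset.Icc 1 n := fun j =>
      (hsubC j).trans (Finset.Icc_subset_Icc le_rfl hm)
    have hQsub : Finset.Icc (m-k+1) m ⊆ Finset.Icc 1 n := Finset.Icc_subset_Icc (by omega) hm
    have hQcard : (Finset.Icc (m-k+1) m).card = k := by rw [Nat.card_Icc]; omega
    refine ⟨((List.range ((row T 0).countP (fun x => decide (x ≤ m)))).map fun j =>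
      List.replicate (tcol T k m j) (completion k m (selF T k m j))).flatten, ?_, ?_, ?_, ?_⟩
    · -- lengths agree
      rw [hsplit, List.length_flatten, List.length_flatten, List.map_map, List.map_map]
      congr 1
      apply List.map_congr_left
      intro j hj
      simp only [Function.comp_apply, List.length_replicate]
      exact (sel_length T k m j).symm
    · -- subsets of Icc 1 n
      intro A hA
      obtain ⟨blk, hblk, hAblk⟩ := List.mem_flatten.1 hA
      obtain ⟨j, hj, rfl⟩ := List.mem_map.1 hblk
      rw [List.eq_of_mem_replicate hAblk]
      exact hsubCn j
    · -- chain
      have hmemC : ∀ A ∈ ((List.range ((row T 0).countP (fun x => decide (x ≤ m)))).map fun j =>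
          List.replicate (tcol T k m j) (completion k m (selF T k m j))).flatten,
          ∃ j, A = completion k m (selF T k m j) := by
        intro A hA
        obtain ⟨blk, hblk, hAblk⟩ := List.mem_flatten.1 hA
        obtain ⟨j, hj, rfl⟩ := List.mem_map.1 hblk
        exact ⟨j, List.eq_of_mem_replicate hAblk⟩
      have hchainLc : List.Chain' FLE (((List.range ((row T 0).countP (fun x => decide (x ≤ m)))).map
          fun j => List.replicate (tcol T k m j) (completion k m (selF T k m j))).flatten) := by
        have hne : [] ∉ (List.range ((row T 0).countP (fun x => decide (x ≤ m)))).map fun j =>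
            List.replicate (tcol T k m j) (completion k m (selF T k m j)) := by
          intro hcon
          obtain ⟨j, hj, heq⟩ := List.mem_map.1 hcon
          rw [List.mem_range] at hj
          have h1 := tcol_pos T hk hj
          have h2 := congrArg List.length heq
          simp at h2
          omega
        apply (List.isChain_flatten hne).2
        constructor
        · intro l hl
          obtain ⟨j, hj, rfl⟩ := List.mem_map.1 hl
          exact chain'_replicate_of_refl (FLE_refl _) _
        · rw [List.isChain_map]
          rcases hJ0 : (row T 0).countP (fun x => decide (x ≤ m)) with _ | J'
          · simp
          · rw [List.isChain_range_succ]
            intro j hj x hx y hy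
            have hgl : (List.replicate (tcol T k m j) (completion k m (selF T k m j))).getLast?
                = some (completion k m (selF T k m j)) :=
              getLast?_replicate (by have := tcol_pos T (m := m) hk (j := j) (by omega); omega)
            have hhd : (List.replicate (tcol T k m (j+1)) (completion k m (selF T k m (j+1)))).head?
                = some (completion k m (selF T k m (j+1))) :=
              head?_replicate (by have := tcol_pos T (m := m) hk (j := j+1) (by omega); omega)
            rw [hgl, Option.mem_some_iff] at hx
            rw [hhd, Option.mem_some_iff] at hy
            subst hx
            subst hy
            refine FLE_completion (selF_subset T k m j) (selF_subset T k m (j+1)) ?_ ?_ hkm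
              (cnt_selF_anti T k m j)
            · rw [card_selF]; exact min_le_right _ _
            · rw [card_selF]; exact min_le_right _ _
      apply List.isChain_cons.2
      constructor
      · intro y hy
        have hymem := List.mem_of_mem_head? hy
        rcases List.mem_append.1 hymem with h | h
        · obtain ⟨j, rfl⟩ := hmemC y h
          exact FLE_P (hsubCn j) (hcardC j)
        · rw [List.mem_singleton] at h
          subst h
          exact FLE_P hQsub hQcard
      · apply List.isChain_append.2
        refine ⟨hchainLc, List.isChain_singleton _, ?_⟩
        intro x hx y hy
        rw [List.head?_cons, Option.mem_some_iff] at hy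
        subst hy
        obtain ⟨j, rfl⟩ := hmemC x (List.mem_of_mem_getLast? hx)
        exact FLE_Q (hsubC j) (hcardC j) hkm
    · -- membership
      apply getD_of_forall2
      rw [hsplit]
      apply forall2_flatten
      rw [List.forall₂_iff_get]
      refine ⟨by simp, fun i h1 h2 => ?_⟩
      simp only [List.get_eq_getElem, List.getElem_map, List.getElem_range]
      have hlen := sel_length T k m i
      rw [← hlen]
      apply forall2_replicate
      intro x hx
      exact subset_completion (List.mem_toFinset.2 hx)
  · -- length
    rw [List.length_flatten, List.map_map, count_take_eq_sum T k m]
    have hcomp : (List.length ∘ fun j => sel T k m j) = fun j => tcol T k m j :=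
      funext fun j => sel_length T k m j
    rw [hcomp, sum_map_range]

lemma upper (T : Tableau n) {k m : ℕ} (hk : 1 ≤ k) (hkm : k ≤ m) (hm : m ≤ n)
    (u : List ℕ) (hsub : u.Sublist (colReading T))
    (hread : Readable n u (Finset.Icc 1 k) (Finset.Icc (m - k + 1) m)) :
    u.length ≤ ((T.rows.take k).flatten.countP fun x => decide (x ≤ m)) := by
  classical
  obtain ⟨L, hlen, hsets, hchain, hmem⟩ := hread
  have hf : List.Forall₂ (· ∈ ·) u L := forall2_of_getD hlen hmem
  have hchain2 : List.Chain' FLE (L ++ [Finset.Icc (m-k+1) m]) := hchain.tail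
  have hQcard : (Finset.Icc (m-k+1) m).card = k := by rw [Nat.card_Icc]; omega
  have hAQ : ∀ A ∈ L, FLE A (Finset.Icc (m-k+1) m) := chain_tail_last L hchain2
  have hcard : ∀ A ∈ L, A.card = k := fun A hA => by rw [(hAQ A hA).1, hQcard]
  have hm' : ∀ A ∈ L, ∀ x ∈ A, x ≤ m := by
    intro A hA
    apply le_of_cnt_eq_card
    have h1 : cnt (Finset.Icc (m-k+1) m) m ≤ cnt A m := cnt_le_of_FLE (hAQ A hA) m
    have h2 : cnt (Finset.Icc (m-k+1) m) m = k := by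
      rw [cnt_eq_card_of (fun x hx => (Finset.mem_Icc.1 hx).2), hQcard]
    rw [hcard A hA]
    omega
  have hchainL : List.Chain' FLE L := (List.isChain_append.1 hchain2).1
  have hsort : ∀ c ∈ (List.range ((T.rows.getD 0 []).length)).map (colOf T),
      c.Pairwise (· > ·) := by
    intro c hc
    obtain ⟨j, hj, rfl⟩ := List.mem_map.1 hc
    exact colOf_sorted T j
  have hub := ub_core ((List.range ((T.rows.getD 0 []).length)).map (colOf T)) u L hsort
    hsub hf hchainL hcard hm'
  rw [List.map_map] at hub
  have heq : ((List.range ((T.rows.getD 0 []).length)).map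
      ((fun c => min k (c.countP (fun x => decide (x ≤ m)))) ∘ colOf T)).sum
      = ((T.rows.take k).flatten.countP fun x => decide (x ≤ m)) := by
    rw [count_take_eq_sum T k m]
    show ((List.range ((row T 0).length)).map _).sum = _
    rw [sum_map_range]
    apply Finset.sum_congr rfl
    intro j hj
    simp only [Function.comp_apply]
    rw [countP_colOf T m j]
    unfold tcol
    omega
  rw [heq] at hub
  exact hub


end Stmt10

/-- for a semistandard Young tableau `T` over `{1,…,n}` and `k ≤ m ≤ n`,
the maximum length of a scattered subword of the column reading of `T` readable from
`{1,…,k}` to `{m-k+1,…,m}` equals the number of entries from `{1,…,m}` in the bottom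
`k` rows of `T`. -/
theorem stmt10 (n : ℕ) (T : Tableau n) (k m : ℕ) (hk : 1 ≤ k) (hkm : k ≤ m)
    (hm : m ≤ n) :
    (∃ u : List ℕ, u.Sublist (colReading T) ∧
        Readable n u (Finset.Icc 1 k) (Finset.Icc (m - k + 1) m) ∧
        u.length = ((T.rows.take k).flatten.countP fun x => decide (x ≤ m))) ∧
    (∀ u : List ℕ, u.Sublist (colReading T) →
        Readable n u (Finset.Icc 1 k) (Finset.Icc (m - k + 1) m) →
        u.length ≤ ((T.rows.take k).flatten.countP fun x => decide (x ≤ m))) := by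
  exact ⟨Stmt10.existence T hk hkm hm, fun u h1 h2 => Stmt10.upper T hk hkm hm u h1 h2⟩
end

section
/- Let T be a semistandard tableau over {1,...,n} with parameters i_{x,y} (the number of occurrences of symbol y in row x), and suppose i_{x+1,y+1} ≥ i_{x,y} for all 1 ≤ x < y < n. Let ρ(T)_{p,q} denote the maximum length of a weakly non-decreasing scattered subword of the row reading of T using only letters in {p,...,q}. Then ρ(T)_{p,q} = ∑_{j=p}^{q−1} i_{p,j} + ∑_{j=1}^{p} i_{j,q} for all 1 ≤ p ≤ q ≤ n. -/
section Stmt15Aux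

lemma st15_countP_add_le (l : List ℕ) (p q r : ℕ → Bool)
    (h : ∀ a, (p a = true → q a = true → False) ∧ (p a = true → r a = true) ∧
      (q a = true → r a = true)) :
    l.countP p + l.countP q ≤ l.countP r := by
  induction l with
  | nil => simp
  | cons x l ih =>
    obtain ⟨h1, h2, h3⟩ := h x
    simp only [List.countP_cons]
    cases hp : p x <;> cases hq : q x <;> cases hr : r x <;> simp_all <;> omega

lemma st15_count_sum_Icc (l : List ℕ) (a b : ℕ) :
    ∑ j ∈ Finset.Icc a b, l.count j = l.countP (fun x => decide (a ≤ x ∧ x ≤ b)) := by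
  induction l with
  | nil => simp
  | cons x l ih =>
    simp only [List.count_cons, List.countP_cons]
    rw [Finset.sum_add_distrib, ih]
    congr 1
    rw [Finset.sum_congr rfl (g := fun j => if j = x then (1:ℕ) else 0)
      (fun j _ => by
        by_cases h : j = x
        · subst h; simp
        · have h2 : ¬ x = j := fun hh => h hh.symm
          simp [beq_iff_eq, h, h2])]
    rw [Finset.sum_ite_eq' (Finset.Icc a b) x (fun _ => (1:ℕ))]
    by_cases hx : a ≤ x ∧ x ≤ b <;> simp [Finset.mem_Icc, hx]

lemma st15_length_le_countP {z l : List ℕ} (p : ℕ → Bool) (hs : z.Sublist l)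
    (h : ∀ a ∈ z, p a = true) : z.length ≤ l.countP p := by
  have := hs.countP_le (p := p)
  rwa [List.countP_eq_length.mpr h] at this

lemma st15_sorted_le_getLast : ∀ {l : List ℕ}, l.Pairwise (· ≤ ·) → ∀ (h : l ≠ []),
    ∀ {a}, a ∈ l → a ≤ l.getLast h := by
  intro l
  induction l with
  | nil => intro _ h; simp at h
  | cons x t ih =>
    intro hs h a ha
    rcases eq_or_ne t [] with rfl | ht
    · simp at ha; simp [ha, List.getLast]
    · rw [List.getLast_cons ht]
      rcases List.mem_cons.mp ha with rfl | hat
      · exact (List.pairwise_cons.mp hs).1 _ (List.getLast_mem ht)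
      · exact ih (List.pairwise_cons.mp hs).2 ht hat

lemma st15_sorted_head_le {l : List ℕ} (hs : l.Pairwise (· ≤ ·)) (h : l ≠ []) {a} (ha : a ∈ l) :
    l.head h ≤ a := by
  cases l with
  | nil => simp at h
  | cons x t =>
    rcases List.mem_cons.mp ha with rfl | hat
    · simp
    · simpa using (List.pairwise_cons.mp hs).1 _ hat

lemma st15_sorted_of_const {l : List ℕ} {q : ℕ} (h : ∀ a ∈ l, a = q) : l.Pairwise (· ≤ ·) := by
  induction l with
  | nil => simp
  | cons x t ih =>
    rw [List.pairwise_cons]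
    exact ⟨fun b hb => by rw [h x (by simp), h b (by simp [hb])],
      ih fun a ha => h a (by simp [ha])⟩

lemma st15_descent : ∀ (r₂ r : List ℕ) (t : ℕ), r₂.length ≤ r.length →
    (∀ j, j < r₂.length → r.getD j 0 < r₂.getD j 0) →
    r₂.countP (fun a => decide (a ≤ t)) ≤ r.countP (fun a => decide (a < t)) := by
  intro r₂
  induction r₂ with
  | nil => intro r t _ _; simp
  | cons a₂ r₂' ih =>
    intro r t hlen hcol
    cases r with
    | nil => simp at hlen
    | cons a r' =>
      have h0 : a < a₂ := by simpa using hcol 0 (by simp)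
      have ihh := ih r' t (by simpa using hlen) (fun j hj => by
        simpa using hcol (j+1) (by simpa using Nat.succ_lt_succ hj))
      simp only [List.countP_cons, decide_eq_true_eq]
      by_cases h2 : a₂ ≤ t <;> by_cases h3 : a < t <;> simp [h2, h3] <;> omega

lemma st15_readTake (R : List (List ℕ)) (k : ℕ) :
    ((R.take (k+1)).reverse.flatten) = R.getD k [] ++ (R.take k).reverse.flatten := by
  rw [List.take_succ, List.reverse_append, List.flatten_append, List.getD_eq_getElem?_getD]
  cases h : R[k]? <;> simp

lemma st15_readDrop (R : List (List ℕ)) (k : ℕ) :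
    (R.drop k).reverse.flatten = (R.drop (k+1)).reverse.flatten ++ R.getD k [] := by
  by_cases h : k < R.length
  · rw [List.drop_eq_getElem_cons h, List.reverse_cons, List.flatten_append]
    simp [List.getD_eq_getElem?_getD, List.getElem?_eq_getElem h]
  · rw [List.drop_eq_nil_of_le (by omega), List.drop_eq_nil_of_le (by omega),
      List.getD_eq_getElem?_getD, List.getElem?_eq_none (by omega)]
    simp

lemma st15_splitRead (R : List (List ℕ)) (k : ℕ) :
    R.reverse.flatten = (R.drop k).reverse.flatten ++ (R.take k).reverse.flatten := by
  conv_lhs => rw [← List.take_append_drop k R]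
  rw [List.reverse_append, List.flatten_append]

lemma st15_getD_drop (R : List (List ℕ)) (k i : ℕ) :
    (R.drop k).getD i [] = R.getD (k+i) [] := by
  simp [List.getD_eq_getElem?_getD, List.getElem?_drop]

lemma st15_flatten_filter_sublist (g : ℕ → Bool) (L : List (List ℕ)) :
    (L.map (fun r => r.filter g)).flatten.Sublist L.flatten := by
  induction L with
  | nil => simp
  | cons r L ih => simpa using (r.filter_sublist).append ih

lemma st15_sumTake (R : List (List ℕ)) (g : List ℕ → ℕ) (hg : g [] = 0) :
    ∀ k, ((R.take k).map g).sum = ∑ x ∈ Finset.range k, g (R.getD x []) := by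
  intro k
  induction k with
  | zero => simp
  | succ k ih =>
    rw [List.take_succ, List.map_append, List.sum_append, ih, Finset.sum_range_succ,
      List.getD_eq_getElem?_getD]
    cases h : R[k]? <;> simp [hg]

lemma st15_Icc_top (a b : ℕ) (h : a ≤ b) (f : ℕ → ℕ) :
    ∑ j ∈ Finset.Icc a b, f j = (∑ j ∈ Finset.Ico a b, f j) + f b := by
  rw [← Finset.Ico_add_one_right_eq_Icc, Finset.sum_Ico_succ_top (by omega)]

lemma st15_sum3 (f : ℕ → ℕ) {lo c a1 b1 a2 hi : ℕ} (h1 : c < a1) (h2 : b1 < a2)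
    (h3 : lo ≤ a1) (h4 : lo ≤ a2) (h5 : b1 ≤ hi) (h6 : c ≤ hi) (h7 : c < a2) :
    ((∑ j ∈ Finset.Icc lo c, f j) + ∑ j ∈ Finset.Icc a1 b1, f j)
      + ∑ j ∈ Finset.Icc a2 hi, f j ≤ ∑ j ∈ Finset.Icc lo hi, f j := by
  have d1 : Disjoint (Finset.Icc lo c) (Finset.Icc a1 b1) :=
    Finset.disjoint_left.mpr fun x hx hy => by
      simp only [Finset.mem_Icc] at hx hy; omega
  have d2 : Disjoint (Finset.Icc lo c ∪ Finset.Icc a1 b1) (Finset.Icc a2 hi) :=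
    Finset.disjoint_left.mpr fun x hx hy => by
      simp only [Finset.mem_Icc, Finset.mem_union] at hx hy; omega
  rw [← Finset.sum_union d1, ← Finset.sum_union d2]
  refine Finset.sum_le_sum_of_subset fun x hx => ?_
  simp only [Finset.mem_union, Finset.mem_Icc] at hx ⊢
  omega

lemma st15_sum2 (f : ℕ → ℕ) {lo c a2 hi : ℕ} (h2 : c < a2) (h3 : lo ≤ c+1) (h4 : lo ≤ a2)
    (h6 : c ≤ hi) :
    (∑ j ∈ Finset.Icc lo c, f j) + ∑ j ∈ Finset.Icc a2 hi, f j
      ≤ ∑ j ∈ Finset.Icc lo hi, f j := by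
  have := st15_sum3 f (lo := lo) (c := c) (a1 := c+1) (b1 := c) (a2 := a2) (hi := hi)
    (by omega) h2 h3 h4 h6 h6 h2
  simpa [Finset.Icc_eq_empty (show ¬ (c+1 ≤ c) by omega)] using this

end Stmt15Aux

lemma st15_rowSorted {n : ℕ} (T : Tableau n) (i : ℕ) : (T.rows.getD i []).Pairwise (· ≤ ·) := by
  by_cases h : i < T.rows.length
  · refine T.row_weak _ ?_
    rw [List.getD_eq_getElem?_getD, List.getElem?_eq_getElem h]
    exact List.getElem_mem h
  · rw [List.getD_eq_getElem?_getD, List.getElem?_eq_none (by omega)]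
    simp

lemma st15_rowLB {n : ℕ} (T : Tableau n) : ∀ i, ∀ a ∈ T.rows.getD i [], i + 1 ≤ a := by
  intro i
  induction i with
  | zero =>
    intro a ha
    by_cases h : 0 < T.rows.length
    · have hmem : T.rows.getD 0 [] ∈ T.rows := by
        rw [List.getD_eq_getElem?_getD, List.getElem?_eq_getElem h]
        exact List.getElem_mem h
      have := T.entries_mem _ hmem a ha
      simp only [Finset.mem_Icc] at this
      omega
    · rw [List.getD_eq_getElem?_getD, List.getElem?_eq_none (by omega)] at ha
      simp at ha
  | succ i ih =>
    intro a ha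
    obtain ⟨j, hj, rfl⟩ := List.getElem_of_mem ha
    have hcol := T.col_strict i j hj
    have hlen : j < (T.rows.getD i []).length := lt_of_lt_of_le hj (T.shape i)
    have hmem : (T.rows.getD i []).getD j 0 ∈ T.rows.getD i [] := by
      have he : (T.rows.getD i []).getD j 0 = (T.rows.getD i [])[j] := by
        rw [List.getD_eq_getElem?_getD, List.getElem?_eq_getElem hlen, Option.getD_some]
      rw [he]
      exact List.getElem_mem hlen
    have hib := ih _ hmem
    have : (T.rows.getD (i+1) []).getD j 0 = (T.rows.getD (i + 1) [])[j] := by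
      rw [List.getD_eq_getElem?_getD, List.getElem?_eq_getElem hj, Option.getD_some]
    omega

lemma st15_shiftSum {n : ℕ} (T : Tableau n)
    (hyp : ∀ x y, 1 ≤ x → x < y → y < n → rowCount T x y ≤ rowCount T (x + 1) (y + 1))
    (x a b : ℕ) (hx : 1 ≤ x) (ha : x < a) (hb : b < n) :
    ∑ j ∈ Finset.Icc a b, rowCount T x j ≤ ∑ j ∈ Finset.Icc (a+1) (b+1), rowCount T (x+1) j := by
  have h1 : ∑ j ∈ Finset.Icc (a+1) (b+1), rowCount T (x+1) j
      = ∑ j ∈ Finset.Icc a b, rowCount T (x+1) (j+1) := by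
    rw [← Finset.map_add_right_Icc a b 1, Finset.sum_map]
    simp [addRightEmbedding]
  rw [h1]
  refine Finset.sum_le_sum fun j hj => ?_
  have := Finset.mem_Icc.mp hj
  exact hyp x j hx (by omega) (by omega)

lemma st15_lemA : ∀ (S : List (List ℕ)),
    (∀ i, (S.getD (i+1) []).length ≤ (S.getD i []).length) →
    (∀ i j, j < (S.getD (i+1) []).length → (S.getD i []).getD j 0 < (S.getD (i+1) []).getD j 0) →
    ∀ (u : List ℕ) (b : ℕ), u.Sublist S.reverse.flatten → u.Pairwise (· ≤ ·) →
      (∀ a ∈ u, a ≤ b) → u.length ≤ (S.getD 0 []).countP (fun a => decide (a ≤ b)) := by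
  intro S
  induction S with
  | nil =>
    intro _ _ u b hu _ _
    have : u = [] := List.sublist_nil.mp (by simpa using hu)
    simp [this]
  | cons r S' ih =>
    intro hlen hcol u b hu hs hub
    have hread : (r :: S').reverse.flatten = S'.reverse.flatten ++ r := by simp
    rw [hread] at hu
    obtain ⟨u₁, u₂, rfl, hu₁, hu₂⟩ := List.sublist_append_iff.mp hu
    have hps := List.pairwise_append.mp hs
    rcases eq_or_ne u₁ [] with rfl | hne
    · simp only [List.nil_append, List.getD_cons_zero] at *
      exact st15_length_le_countP _ hu₂ (fun a ha => by simpa using hub a ha)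
    · cases S' with
      | nil =>
        exact absurd (List.sublist_nil.mp (by simpa using hu₁)) hne
      | cons r₂ S'' =>
        have hu₁s : u₁.Pairwise (· ≤ ·) := hps.1
        have hu₂s : u₂.Pairwise (· ≤ ·) := hps.2.1
        set b' := u₁.getLast hne with hb'
        have hb'mem : b' ∈ u₁ := List.getLast_mem hne
        have hu₁b : ∀ a ∈ u₁, a ≤ b' := fun a ha => st15_sorted_le_getLast hu₁s hne ha
        have hlen' : ∀ i, (((r₂ :: S'').getD (i+1) [])).length ≤ ((r₂ :: S'').getD i []).length := by
          intro i
          have := hlen (i+1)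
          simpa only [List.getD_cons_succ] using this
        have hcol' : ∀ i j, j < ((r₂ :: S'').getD (i+1) []).length →
            ((r₂ :: S'').getD i []).getD j 0 < ((r₂ :: S'').getD (i+1) []).getD j 0 := by
          intro i j hj
          have := hcol (i+1) j (by simpa only [List.getD_cons_succ] using hj)
          simpa only [List.getD_cons_succ] using this
        have IH := ih hlen' hcol' u₁ b' hu₁ hu₁s hu₁b
        have hdlen : r₂.length ≤ r.length := by
          have := hlen 0
          simpa only [List.getD_cons_succ, List.getD_cons_zero] using this
        have hdcol : ∀ j, j < r₂.length → r.getD j 0 < r₂.getD j 0 := by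
          intro j hj
          have := hcol 0 j (by simpa only [List.getD_cons_succ, List.getD_cons_zero] using hj)
          simpa only [List.getD_cons_succ, List.getD_cons_zero] using this
        have hdes := st15_descent r₂ r b' hdlen hdcol
        have hu₂len : u₂.length ≤ r.countP (fun a => decide (b' ≤ a ∧ a ≤ b)) := by
          refine st15_length_le_countP _ hu₂ (fun a ha => ?_)
          have h1 : b' ≤ a := hps.2.2 b' hb'mem a ha
          have h2 : a ≤ b := hub a (by simp [ha])
          exact decide_eq_true ⟨h1, h2⟩
        have hb'b : b' ≤ b := hub b' (by simp [hb'mem])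
        have hcomb := st15_countP_add_le r (fun a => decide (a < b'))
          (fun a => decide (b' ≤ a ∧ a ≤ b)) (fun a => decide (a ≤ b))
          (fun a => by
            refine ⟨?_, ?_, ?_⟩
            · intro h1 h2
              simp only [decide_eq_true_eq] at h1 h2
              omega
            · intro h1
              simp only [decide_eq_true_eq] at h1 ⊢
              omega
            · intro h1
              simp only [decide_eq_true_eq] at h1 ⊢
              omega)
        simp only [List.getD_cons_zero] at IH
        rw [List.length_append, List.getD_cons_zero]
        omega

lemma st15_lemB {n : ℕ} (T : Tableau n)
    (hyp : ∀ x y, 1 ≤ x → x < y → y < n → rowCount T x y ≤ rowCount T (x + 1) (y + 1))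
    (q : ℕ) (hq : q ≤ n) :
    ∀ (k : ℕ) (z : List ℕ) (c : ℕ), k + 1 ≤ q → z.Sublist ((T.rows.take k).reverse.flatten) →
      z.Pairwise (· ≤ ·) → (∀ a ∈ z, k + 1 ≤ a ∧ a ≤ q) → k ≤ c → c ≤ q →
      (∀ a ∈ z, c ≤ a) →
      z.length + ∑ j ∈ Finset.Icc (k+1) c, rowCount T (k+1) j ≤
        (∑ j ∈ Finset.Ico (k+1) q, rowCount T (k+1) j) +
          ∑ x ∈ Finset.Icc 1 (k+1), rowCount T x q := by
  intro k
  induction k with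
  | zero =>
    intro z c hkq hz hs hmem hkc hcq hcz
    have hz0 : z = [] := List.sublist_nil.mp (by simpa using hz)
    subst hz0
    have e1 : ∑ x ∈ Finset.Icc 1 1, rowCount T x q = rowCount T 1 q := by simp
    have e2 : ∑ j ∈ Finset.Icc 1 q, rowCount T 1 j
        = (∑ j ∈ Finset.Ico 1 q, rowCount T 1 j) + rowCount T 1 q :=
      st15_Icc_top 1 q (by omega) _
    have e3 : ∑ j ∈ Finset.Icc 1 c, rowCount T 1 j ≤ ∑ j ∈ Finset.Icc 1 q, rowCount T 1 j :=
      Finset.sum_le_sum_of_subset (Finset.Icc_subset_Icc_right hcq)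
    simp only [List.length_nil, Nat.zero_add, zero_add, e1]
    omega
  | succ k ih =>
    intro z c hkq hz hs hmem hkc hcq hcz
    rw [st15_readTake] at hz
    obtain ⟨z₁, z₂, rfl, hz₁, hz₂⟩ := List.sublist_append_iff.mp hz
    have hps := List.pairwise_append.mp hs
    have hIccq2 : ∑ j ∈ Finset.Icc (k+1+1) q, rowCount T (k+1+1) j
        = (∑ j ∈ Finset.Ico (k+1+1) q, rowCount T (k+1+1) j) + rowCount T (k+1+1) q :=
      st15_Icc_top (k+1+1) q (by omega) _
    have hSq : ∑ x ∈ Finset.Icc 1 (k+1+1), rowCount T x q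
        = (∑ x ∈ Finset.Icc 1 (k+1), rowCount T x q) + rowCount T (k+1+1) q :=
      Finset.sum_Icc_succ_top (by omega) _
    rcases eq_or_ne z₁ [] with rfl | hne
    · simp only [List.nil_append] at hs hmem hcz ⊢
      have IH := ih z₂ c (by omega) hz₂ hps.2.1
        (fun a ha => ⟨by have := (hmem a ha).1; omega, (hmem a ha).2⟩)
        (by omega) hcq hcz
      have key : (∑ j ∈ Finset.Icc (k+1+1) c, rowCount T (k+1+1) j)
          + ∑ j ∈ Finset.Ico (k+1) q, rowCount T (k+1) j
          ≤ (∑ j ∈ Finset.Icc (k+1+1) q, rowCount T (k+1+1) j)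
            + ∑ j ∈ Finset.Icc (k+1) c, rowCount T (k+1) j := by
        rcases Nat.lt_or_ge c q with hcq' | hcq'
        · have hsplit : (∑ j ∈ Finset.Ico (k+1) (c+1), rowCount T (k+1) j)
              + ∑ j ∈ Finset.Ico (c+1) q, rowCount T (k+1) j
              = ∑ j ∈ Finset.Ico (k+1) q, rowCount T (k+1) j :=
            Finset.sum_Ico_consecutive _ (by omega) (by omega)
          have hIcoIcc : Finset.Ico (k+1) (c+1) = Finset.Icc (k+1) c := Finset.Ico_add_one_right_eq_Icc _ _
          have hIcoIcc2 : Finset.Ico (c+1) q = Finset.Icc (c+1) (q-1) := by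
            rw [← Finset.Ico_add_one_right_eq_Icc]
            congr 1
            omega
          have hshift : ∑ j ∈ Finset.Icc (c+1) (q-1), rowCount T (k+1) j
              ≤ ∑ j ∈ Finset.Icc (c+2) q, rowCount T (k+1+1) j := by
            have h := st15_shiftSum T hyp (k+1) (c+1) (q-1) (by omega) (by omega) (by omega)
            have he2 : q-1+1 = q := by omega
            rwa [he2] at h
          have hdisj : (∑ j ∈ Finset.Icc (k+1+1) c, rowCount T (k+1+1) j)
              + ∑ j ∈ Finset.Icc (c+2) q, rowCount T (k+1+1) j
              ≤ ∑ j ∈ Finset.Icc (k+1+1) q, rowCount T (k+1+1) j :=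
            st15_sum2 _ (by omega) (by omega) (by omega) (by omega)
          rw [← hsplit, hIcoIcc, hIcoIcc2]
          omega
        · have h1 : ∑ j ∈ Finset.Ico (k+1) q, rowCount T (k+1) j
              ≤ ∑ j ∈ Finset.Icc (k+1) c, rowCount T (k+1) j := by
            refine Finset.sum_le_sum_of_subset fun x hx => ?_
            simp only [Finset.mem_Ico, Finset.mem_Icc] at hx ⊢
            omega
          have h2 : ∑ j ∈ Finset.Icc (k+1+1) c, rowCount T (k+1+1) j
              ≤ ∑ j ∈ Finset.Icc (k+1+1) q, rowCount T (k+1+1) j := by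
            refine Finset.sum_le_sum_of_subset fun x hx => ?_
            simp only [Finset.mem_Icc] at hx ⊢
            omega
          omega
      omega
    · have hz₁s : z₁.Pairwise (· ≤ ·) := hps.1
      have hz₂s : z₂.Pairwise (· ≤ ·) := hps.2.1
      have hcross := hps.2.2
      have hs₀mem : z₁.head hne ∈ z₁ := List.head_mem hne
      have htmem : z₁.getLast hne ∈ z₁ := List.getLast_mem hne
      have hs₀z := hmem _ (List.mem_append_left z₂ hs₀mem)
      have htz := hmem _ (List.mem_append_left z₂ htmem)
      have hs₀t : z₁.head hne ≤ z₁.getLast hne := st15_sorted_le_getLast hz₁s hne hs₀mem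
      have hcs₀ : c ≤ z₁.head hne := hcz _ (List.mem_append_left z₂ hs₀mem)
      have hz₁len : z₁.length ≤ ∑ j ∈ Finset.Icc (z₁.head hne) (z₁.getLast hne),
          rowCount T (k+1) j := by
        have h1 := st15_length_le_countP
          (fun x => decide (z₁.head hne ≤ x ∧ x ≤ z₁.getLast hne)) hz₁
          (fun a ha => decide_eq_true
            ⟨st15_sorted_head_le hz₁s hne ha, st15_sorted_le_getLast hz₁s hne ha⟩)
        have h2 : ∑ j ∈ Finset.Icc (z₁.head hne) (z₁.getLast hne), rowCount T (k+1) j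
            = (T.rows.getD k []).countP
                (fun x => decide (z₁.head hne ≤ x ∧ x ≤ z₁.getLast hne)) := by
          rw [← st15_count_sum_Icc]
          refine Finset.sum_congr rfl fun j _ => ?_
          simp [rowCount]
        omega
      have IH := ih z₂ (z₁.getLast hne) (by omega) hz₂ hz₂s
        (fun a ha => ⟨by have := (hmem a (List.mem_append_right z₁ ha)).1; omega,
          (hmem a (List.mem_append_right z₁ ha)).2⟩)
        (by omega) (by omega) (fun a ha => hcross _ htmem a ha)
      have key : (∑ j ∈ Finset.Icc (z₁.head hne) (z₁.getLast hne), rowCount T (k+1) j)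
          + (∑ j ∈ Finset.Icc (k+1+1) c, rowCount T (k+1+1) j)
          + ∑ j ∈ Finset.Ico (k+1) q, rowCount T (k+1) j
          ≤ (∑ j ∈ Finset.Icc (k+1+1) q, rowCount T (k+1+1) j)
            + ∑ j ∈ Finset.Icc (k+1) (z₁.getLast hne), rowCount T (k+1) j := by
        rcases Nat.lt_or_ge (z₁.getLast hne) q with htq | htq
        · have hsplit : (∑ j ∈ Finset.Ico (k+1) (z₁.getLast hne + 1), rowCount T (k+1) j)
              + ∑ j ∈ Finset.Ico (z₁.getLast hne + 1) q, rowCount T (k+1) j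
              = ∑ j ∈ Finset.Ico (k+1) q, rowCount T (k+1) j :=
            Finset.sum_Ico_consecutive _ (by omega) (by omega)
          have hIcoIcc : Finset.Ico (k+1) (z₁.getLast hne + 1)
              = Finset.Icc (k+1) (z₁.getLast hne) := Finset.Ico_add_one_right_eq_Icc _ _
          have hIcoIcc2 : Finset.Ico (z₁.getLast hne + 1) q
              = Finset.Icc (z₁.getLast hne + 1) (q-1) := by
            rw [← Finset.Ico_add_one_right_eq_Icc]
            congr 1
            omega
          have hshift1 : ∑ j ∈ Finset.Icc (z₁.head hne) (z₁.getLast hne), rowCount T (k+1) j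
              ≤ ∑ j ∈ Finset.Icc (z₁.head hne + 1) (z₁.getLast hne + 1),
                  rowCount T (k+1+1) j :=
            st15_shiftSum T hyp (k+1) _ _ (by omega) (by omega) (by omega)
          have hshift2 : ∑ j ∈ Finset.Icc (z₁.getLast hne + 1) (q-1), rowCount T (k+1) j
              ≤ ∑ j ∈ Finset.Icc (z₁.getLast hne + 2) q, rowCount T (k+1+1) j := by
            have h := st15_shiftSum T hyp (k+1) (z₁.getLast hne + 1) (q-1)
              (by omega) (by omega) (by omega)
            have he2 : q-1+1 = q := by omega
            rwa [he2] at h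
          have hdisj : ((∑ j ∈ Finset.Icc (k+1+1) c, rowCount T (k+1+1) j)
              + ∑ j ∈ Finset.Icc (z₁.head hne + 1) (z₁.getLast hne + 1), rowCount T (k+1+1) j)
              + ∑ j ∈ Finset.Icc (z₁.getLast hne + 2) q, rowCount T (k+1+1) j
              ≤ ∑ j ∈ Finset.Icc (k+1+1) q, rowCount T (k+1+1) j :=
            st15_sum3 _ (by omega) (by omega) (by omega) (by omega) (by omega) (by omega)
              (by omega)
          rw [← hsplit, hIcoIcc, hIcoIcc2]
          omega
        · have htq' : z₁.getLast hne = q := by omega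
          have e4 : ∑ j ∈ Finset.Icc (k+1) (z₁.getLast hne), rowCount T (k+1) j
              = (∑ j ∈ Finset.Ico (k+1) q, rowCount T (k+1) j) + rowCount T (k+1) q := by
            rw [htq']
            exact st15_Icc_top (k+1) q (by omega) _
          have e5 : ∑ j ∈ Finset.Icc (z₁.head hne) (z₁.getLast hne), rowCount T (k+1) j
              = (∑ j ∈ Finset.Icc (z₁.head hne) (q-1), rowCount T (k+1) j)
                + rowCount T (k+1) q := by
            rw [htq', st15_Icc_top (z₁.head hne) q (by omega)]
            have : Finset.Ico (z₁.head hne) q = Finset.Icc (z₁.head hne) (q-1) := by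
              rw [← Finset.Ico_add_one_right_eq_Icc]
              congr 1
              omega
            rw [this]
          have hshift1 : ∑ j ∈ Finset.Icc (z₁.head hne) (q-1), rowCount T (k+1) j
              ≤ ∑ j ∈ Finset.Icc (z₁.head hne + 1) q, rowCount T (k+1+1) j := by
            have h := st15_shiftSum T hyp (k+1) (z₁.head hne) (q-1)
              (by omega) (by omega) (by omega)
            have he2 : q-1+1 = q := by omega
            rwa [he2] at h
          have hdisj : (∑ j ∈ Finset.Icc (k+1+1) c, rowCount T (k+1+1) j)
              + ∑ j ∈ Finset.Icc (z₁.head hne + 1) q, rowCount T (k+1+1) j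
              ≤ ∑ j ∈ Finset.Icc (k+1+1) q, rowCount T (k+1+1) j :=
            st15_sum2 _ (by omega) (by omega) (by omega) (by omega)
          omega
      rw [List.length_append]
      omega

lemma st15_count_filter (l : List ℕ) (q : ℕ) :
    (l.filter (fun a => a == q)).length = l.count q := by
  rw [← List.countP_eq_length_filter]
  rfl

/-- let `T` be a semistandard tableau over `{1,…,n}` whose row counts
satisfy `i_{x+1,y+1} ≥ i_{x,y}` for `1 ≤ x < y < n`. Then for `1 ≤ p ≤ q ≤ n`, the
maximum length of a weakly non-decreasing scattered subword of the row reading of `T`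
with letters in `{p,…,q}` equals `∑_{j=p}^{q-1} i_{p,j} + ∑_{j=1}^{p} i_{j,q}`. -/
theorem stmt15 (n : ℕ) (T : Tableau n)
    (hyp : ∀ x y, 1 ≤ x → x < y → y < n → rowCount T x y ≤ rowCount T (x + 1) (y + 1))
    (p q : ℕ) (hp : 1 ≤ p) (hpq : p ≤ q) (hq : q ≤ n) :
    (∃ u : List ℕ, u.Sublist (rowReading T) ∧ List.Pairwise (· ≤ ·) u ∧
        (∀ x ∈ u, x ∈ Finset.Icc p q) ∧
        u.length = (∑ j ∈ Finset.Ico p q, rowCount T p j) +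
          ∑ j ∈ Finset.Icc 1 p, rowCount T j q) ∧
    (∀ u : List ℕ, u.Sublist (rowReading T) → List.Pairwise (· ≤ ·) u →
        (∀ x ∈ u, x ∈ Finset.Icc p q) →
        u.length ≤ (∑ j ∈ Finset.Ico p q, rowCount T p j) +
          ∑ j ∈ Finset.Icc 1 p, rowCount T j q) := by
  obtain ⟨k, rfl⟩ : ∃ k, p = k + 1 := ⟨p - 1, by omega⟩
  constructor
  · refine ⟨(T.rows.getD k []).filter (fun a => decide (k+1 ≤ a ∧ a ≤ q)) ++
        ((T.rows.take k).reverse.map (fun r => r.filter (fun a => a == q))).flatten,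
      ?_, ?_, ?_, ?_⟩
    · have h1 : rowReading T
          = (T.rows.drop (k+1)).reverse.flatten ++ (T.rows.getD k []
            ++ (T.rows.take k).reverse.flatten) := by
        unfold rowReading
        rw [st15_splitRead T.rows k, st15_readDrop T.rows k, List.append_assoc]
      rw [h1]
      refine List.Sublist.trans ?_ (List.sublist_append_right _ _)
      exact ((T.rows.getD k []).filter_sublist).append (st15_flatten_filter_sublist _ _)
    · apply List.pairwise_append.mpr
      refine ⟨?_, ?_, ?_⟩
      · exact List.Pairwise.sublist List.filter_sublist (st15_rowSorted T k)
      · refine st15_sorted_of_const (q := q) ?_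
        intro a ha
        obtain ⟨l, hl, hal⟩ := List.mem_flatten.mp ha
        obtain ⟨r, _, rfl⟩ := List.mem_map.mp hl
        have := (List.mem_filter.mp hal).2
        simpa using this
      · intro a ha b hb
        have h1 := (List.mem_filter.mp ha).2
        simp only [decide_eq_true_eq] at h1
        obtain ⟨l, hl, hbl⟩ := List.mem_flatten.mp hb
        obtain ⟨r, _, rfl⟩ := List.mem_map.mp hl
        have h2 := (List.mem_filter.mp hbl).2
        simp only [beq_iff_eq] at h2
        omega
    · intro x hx
      rcases List.mem_append.mp hx with h | h
      · have := (List.mem_filter.mp h).2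
        simp only [decide_eq_true_eq] at this
        simp only [Finset.mem_Icc]
        omega
      · obtain ⟨l, hl, hxl⟩ := List.mem_flatten.mp h
        obtain ⟨r, _, rfl⟩ := List.mem_map.mp hl
        have := (List.mem_filter.mp hxl).2
        simp only [beq_iff_eq] at this
        subst this
        simp only [Finset.mem_Icc]
        omega
    · rw [List.length_append]
      have hF : ((T.rows.getD k []).filter (fun a => decide (k+1 ≤ a ∧ a ≤ q))).length
          = ∑ j ∈ Finset.Icc (k+1) q, (T.rows.getD k []).count j := by
        rw [st15_count_sum_Icc, List.countP_eq_length_filter]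
      have hM : (((T.rows.take k).reverse.map
            (fun r => r.filter (fun a => a == q))).flatten).length
          = ∑ x ∈ Finset.range k, (T.rows.getD x []).count q := by
        rw [List.length_flatten, List.map_map, List.map_reverse, List.sum_reverse,
          st15_sumTake T.rows _ (by simp) k]
        refine Finset.sum_congr rfl fun x _ => ?_
        exact st15_count_filter _ q
      have hIcc : ∑ j ∈ Finset.Icc (k+1) q, (T.rows.getD k []).count j
          = (∑ j ∈ Finset.Ico (k+1) q, rowCount T (k+1) j) + rowCount T (k+1) q := by
        rw [Finset.sum_congr rfl (fun j _ => show (T.rows.getD k []).count j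
          = rowCount T (k+1) j by simp [rowCount]), st15_Icc_top (k+1) q (by omega)]
      have hSq : ∑ j ∈ Finset.Icc 1 (k+1), rowCount T j q
          = (∑ x ∈ Finset.range k, (T.rows.getD x []).count q) + rowCount T (k+1) q := by
        rw [Finset.sum_Icc_succ_top (by omega : (1:ℕ) ≤ k+1)]
        congr 1
        rw [show Finset.Icc 1 k = Finset.Ico 1 (k+1) from (Finset.Ico_add_one_right_eq_Icc _ _).symm,
          Finset.sum_Ico_eq_sum_range, show k + 1 - 1 = k from by omega]
        refine Finset.sum_congr rfl fun x _ => ?_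
        simp [rowCount, Nat.add_sub_cancel_left]
      omega
  · intro u hu hs hmem
    have hsplit : rowReading T
        = (T.rows.drop k).reverse.flatten ++ (T.rows.take k).reverse.flatten := by
      unfold rowReading
      exact st15_splitRead T.rows k
    rw [hsplit] at hu
    obtain ⟨w, z, rfl, hw, hz⟩ := List.sublist_append_iff.mp hu
    have hps := List.pairwise_append.mp hs
    have hmem' : ∀ a ∈ w ++ z, k+1 ≤ a ∧ a ≤ q := fun a ha => by
      have := hmem a ha
      simpa [Finset.mem_Icc] using this
    rcases eq_or_ne w [] with rfl | hwne
    · have hlz := st15_lemB T hyp q hq k z (k+1) hpq hz hps.2.1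
        (fun a ha => hmem' a (by simp [ha])) (by omega) (by omega)
        (fun a ha => (hmem' a (by simp [ha])).1)
      simp only [List.nil_append]
      omega
    · have hbw : ∀ a ∈ w, a ≤ w.getLast hwne := fun a ha =>
        st15_sorted_le_getLast hps.1 hwne ha
      have hbmem : w.getLast hwne ∈ w := List.getLast_mem hwne
      have hbq : w.getLast hwne ≤ q := (hmem' _ (List.mem_append_left z hbmem)).2
      have hbp : k+1 ≤ w.getLast hwne := (hmem' _ (List.mem_append_left z hbmem)).1
      have hlenS : ∀ i, ((T.rows.drop k).getD (i+1) []).length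
          ≤ ((T.rows.drop k).getD i []).length := by
        intro i
        rw [st15_getD_drop, st15_getD_drop, show k + (i+1) = (k+i) + 1 from by omega]
        exact T.shape (k+i)
      have hcolS : ∀ i j, j < ((T.rows.drop k).getD (i+1) []).length →
          ((T.rows.drop k).getD i []).getD j 0 < ((T.rows.drop k).getD (i+1) []).getD j 0 := by
        intro i j hj
        rw [st15_getD_drop, st15_getD_drop, show k + (i+1) = (k+i) + 1 from by omega]
        rw [st15_getD_drop, show k + (i+1) = (k+i) + 1 from by omega] at hj
        exact T.col_strict (k+i) j hj
      have hwlen := st15_lemA (T.rows.drop k) hlenS hcolS w (w.getLast hwne) hw hps.1 hbw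
      rw [st15_getD_drop, show k + 0 = k from by omega] at hwlen
      have hcount : (T.rows.getD k []).countP (fun a => decide (a ≤ w.getLast hwne))
          = ∑ j ∈ Finset.Icc (k+1) (w.getLast hwne), rowCount T (k+1) j := by
        rw [List.countP_congr (q := fun a => decide (k+1 ≤ a ∧ a ≤ w.getLast hwne))
          (fun x hx => by
            have := st15_rowLB T k x hx
            simp only [decide_eq_true_eq]
            omega)]
        rw [← st15_count_sum_Icc]
        refine Finset.sum_congr rfl fun j _ => ?_
        simp [rowCount]
      have hlz := st15_lemB T hyp q hq k z (w.getLast hwne) hpq hz hps.2.1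
        (fun a ha => hmem' a (List.mem_append_right w ha)) (by omega) hbq
        (fun a ha => hps.2.2 _ hbmem a ha)
      rw [List.length_append]
      omega
end

section
/- Let X be an n × n upper triangular matrix with nonnegative integer entries on and above the main diagonal (−∞ below), satisfying: (A) ∑_{i=1}^n X_{i,i} ≥ ∑_{i=1}^{n−1} X_{i,i+1}; (B) X_{i,j+1} ≥ X_{i,j} for 1 ≤ i ≤ j < n; (C) X_{i−1,j} ≥ X_{i,j} for 1 < i ≤ j ≤ n; (D) X_{i,j} + X_{i+1,j+1} ≥ X_{i,j+1} + X_{i+1,j} for 1 ≤ i < j < n. Then X = ρ(T) for some semistandard tableau T over {1,...,n}, where ρ(T)_{p,q} is the maximum length of a non-decreasing scattered subword of the word of T using only letters in {p,...,q}. -/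
open Finset in
section
variable (X : ℕ → ℕ → ℕ)

def SZ : ℕ → ℕ → ℤ
  | 0, _ => 0
  | r+1, v => if v ≤ r+1 then (X (r+1) (r+1) : ℤ)
      else (X (r+1) v : ℤ) - (X (r+1) (v-1) : ℤ) + SZ r (v-1)

def cZ (r v : ℕ) : ℤ := SZ X r v - SZ X (r-1) v

def cN (r v : ℕ) : ℕ := (cZ X r v).toNat

def NZ (r a b : ℕ) : ℤ := ∑ v ∈ Finset.Icc a b, cZ X r v

def Phi (r a q : ℕ) : ℤ :=
  (∑ v ∈ Finset.Icc a q, SZ X r v) - ∑ v ∈ Finset.Icc a (q-1), SZ X (r-1) v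

lemma SZ_zero (v : ℕ) : SZ X 0 v = 0 := rfl

lemma SZ_diag (r : ℕ) (hr : 1 ≤ r) : SZ X r r = (X r r : ℤ) := by
  obtain ⟨s, rfl⟩ : ∃ s, r = s + 1 := ⟨r - 1, by omega⟩
  simp [SZ]

lemma SZ_eq (r v : ℕ) (hr : 1 ≤ r) (hv : r < v) :
    SZ X r v = (X r v : ℤ) - (X r (v-1) : ℤ) + SZ X (r-1) (v-1) := by
  obtain ⟨s, rfl⟩ : ∃ s, r = s + 1 := ⟨r - 1, by omega⟩
  rw [SZ, if_neg (by omega)]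
  simp

lemma cZ_zero (v : ℕ) : cZ X 0 v = 0 := by simp [cZ, SZ_zero]

lemma cZ_one (v : ℕ) (hv : 1 < v) : cZ X 1 v = (X 1 v : ℤ) - (X 1 (v-1) : ℤ) := by
  rw [cZ, SZ_eq X 1 v le_rfl hv]
  simp [SZ_zero]

lemma cZ_one_one : cZ X 1 1 = (X 1 1 : ℤ) := by
  rw [cZ, SZ_diag X 1 le_rfl]; simp [SZ_zero]

lemma cZ_rec (r v : ℕ) (hr : 2 ≤ r) (hv : r < v) :
    cZ X r v = ((X r v : ℤ) - X r (v-1) - X (r-1) v + X (r-1) (v-1))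
      + cZ X (r-1) (v-1) := by
  obtain ⟨s, rfl⟩ : ∃ s, r = s + 2 := ⟨r - 2, by omega⟩
  have e1 : s + 2 - 1 = s + 1 := rfl
  have e2 : s + 1 - 1 = s := rfl
  rw [cZ, cZ, SZ_eq X (s+2) v (by omega) hv, e1,
    SZ_eq X (s+1) v (by omega) (by omega), e2]
  ring

-- telescoping
lemma SZ_tel (k v : ℕ) : SZ X k v = ∑ r ∈ Finset.Icc 1 k, cZ X r v := by
  induction k with
  | zero => simp [SZ_zero]
  | succ k ih =>
    rw [Finset.sum_Icc_succ_top (by omega), ← ih, cZ]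
    simp

-- subdiagonal formula
lemma SZ_subdiag (v : ℕ) (hv : 1 ≤ v) :
    SZ X (v-1) v = ∑ i ∈ Finset.Icc 1 (v-1), ((X i (i+1) : ℤ) - X i i) := by
  obtain ⟨w, rfl⟩ : ∃ w, v = w + 1 := ⟨v - 1, by omega⟩
  clear hv
  induction w with
  | zero => simp [SZ_zero]
  | succ w ih =>
    have e : w + 1 + 1 - 1 = w + 1 := rfl
    rw [e, SZ_eq X (w+1) (w+2) (by omega) (by omega)]
    have e2 : w + 2 - 1 = w + 1 := rfl
    have e3 : w + 1 - 1 = w := rfl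
    rw [e2, e3]
    rw [e3] at ih
    rw [ih, Finset.sum_Icc_succ_top (by omega)]
    ring


section Ineq
variable {n : ℕ} {X : ℕ → ℕ → ℕ}
variable (hA : ∑ i ∈ Finset.Icc 1 (n - 1), X i (i + 1) ≤ ∑ i ∈ Finset.Icc 1 n, X i i)
variable (hB : ∀ i j, 1 ≤ i → i ≤ j → j < n → X i j ≤ X i (j + 1))
variable (hC : ∀ i j, 1 < i → i ≤ j → j ≤ n → X i j ≤ X (i - 1) j)
variable (hD : ∀ i j, 1 ≤ i → i < j → j < n →
      X i (j + 1) + X (i + 1) j ≤ X i j + X (i + 1) (j + 1))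

include hB hD in
lemma c_step (r v : ℕ) (hr : 1 ≤ r) (hv : r < v) (hn : v ≤ n) :
    cZ X (r-1) (v-1) ≤ cZ X r v := by
  rcases Nat.eq_or_lt_of_le hr with h | h
  · rw [← h]
    simp only [Nat.sub_self, cZ_zero]
    rw [cZ_one X v (by omega)]
    have h2 := hB 1 (v-1) le_rfl (by omega) (by omega)
    rw [show v - 1 + 1 = v by omega] at h2
    have h3 : (X 1 (v-1) : ℤ) ≤ X 1 v := by exact_mod_cast h2
    linarith
  · rw [cZ_rec X r v (by omega) hv]
    have := hD (r-1) (v-1) (by omega) (by omega) (by omega)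
    rw [show r - 1 + 1 = r by omega, show v - 1 + 1 = v by omega] at this
    have : ((X (r-1) v : ℤ) + X r (v-1)) ≤ (X (r-1) (v-1) : ℤ) + X r v := by
      exact_mod_cast this
    linarith

lemma cZ_diag_eq (v : ℕ) (hv : 1 ≤ v) :
    cZ X v v = (X v v : ℤ) - ∑ i ∈ Finset.Icc 1 (v-1), ((X i (i+1) : ℤ) - X i i) := by
  rw [cZ, SZ_diag X v hv, SZ_subdiag X v hv]

include hA hC in
lemma c_diag_nonneg (v : ℕ) (hv : 1 ≤ v) (hvn : v ≤ n) : 0 ≤ cZ X v v := by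
  have step : ∀ w, 1 ≤ w → w + 1 ≤ n → cZ X (w+1) (w+1) ≤ cZ X w w := by
    intro w h1 h2
    rw [cZ_diag_eq (v := w) h1, cZ_diag_eq (v := w+1) (by omega)]
    rw [show w + 1 - 1 = w by omega, show w = (w-1)+1 by omega,
      Finset.sum_Icc_succ_top (by omega), show w - 1 + 1 = w by omega]
    have := hC (w+1) (w+1) (by omega) le_rfl h2
    have : (X (w+1) (w+1) : ℤ) ≤ X w (w+1) := by
      exact_mod_cast this
    linarith
  have base : 0 ≤ cZ X n n := by
    rw [cZ_diag_eq (v := n) (by omega)]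
    have h1 : (∑ i ∈ Finset.Icc 1 (n-1), (X i (i+1) : ℤ)) ≤
        ∑ i ∈ Finset.Icc 1 n, (X i i : ℤ) := by exact_mod_cast hA
    have h2 : (∑ i ∈ Finset.Icc 1 n, (X i i : ℤ)) =
        (∑ i ∈ Finset.Icc 1 (n-1), (X i i : ℤ)) + X n n := by
      rw [show n = (n-1)+1 by omega, Finset.sum_Icc_succ_top (by omega)]
      rw [show n - 1 + 1 = n by omega]
    rw [Finset.sum_sub_distrib]
    linarith
  -- downward induction
  have main : ∀ d v, v + d = n → 1 ≤ v → 0 ≤ cZ X v v := by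
    intro d
    induction d with
    | zero => intro v hv h1; rw [show v = n by omega]; exact base
    | succ d ih =>
      intro v hv h1
      calc (0:ℤ) ≤ cZ X (v+1) (v+1) := ih (v+1) (by omega) (by omega)
        _ ≤ cZ X v v := step v h1 (by omega)
  exact main (n - v) v (by omega) hv

include hA hB hC hD in
lemma c_nonneg : ∀ r v, 1 ≤ r → r ≤ v → v ≤ n → 0 ≤ cZ X r v := by
  intro r
  induction r with
  | zero => omega
  | succ r ih =>
    intro v _ hv hn
    rcases Nat.eq_or_lt_of_le hv with h | h
    · rw [h]; exact c_diag_nonneg hA hC v (by omega) hn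
    · rcases Nat.eq_zero_or_pos r with h0 | h0
      · subst h0
        calc (0:ℤ) = cZ X 0 (v-1) := (cZ_zero X _).symm
          _ ≤ cZ X 1 v := by
            have := c_step hB hD 1 v le_rfl (by omega) hn
            simpa using this
      · calc (0:ℤ) ≤ cZ X r (v-1) := ih (v-1) (by omega) (by omega) (by omega)
          _ ≤ cZ X (r+1) v := by
            have := c_step hB hD (r+1) v (by omega) (by omega) hn
            simpa using this

include hA hB hC hD in
lemma cN_cast (r v : ℕ) (hr : 1 ≤ r) (hv : r ≤ v) (hn : v ≤ n) :
    (cN X r v : ℤ) = cZ X r v :=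
  Int.toNat_of_nonneg (c_nonneg hA hB hC hD r v hr hv hn)

lemma phi_zero (a q : ℕ) : Phi X 0 a q = 0 := by
  simp [Phi, SZ_zero]

lemma phi_base (r a : ℕ) (ha : 1 ≤ a) : Phi X r a a = SZ X r a := by
  rw [Phi, Finset.Icc_self, Finset.sum_singleton,
    Finset.Icc_eq_empty (by omega), Finset.sum_empty, sub_zero]

lemma phi_succ (r a q : ℕ) (ha : 1 ≤ a) (haq : a ≤ q) :
    Phi X r a (q+1) = Phi X r a q + SZ X r (q+1) - SZ X (r-1) q := by
  rw [Phi, Phi, show q + 1 - 1 = q by omega,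
    Finset.sum_Icc_succ_top (by omega) (SZ X r),
    show q = (q-1)+1 by omega,
    Finset.sum_Icc_succ_top (by omega) (SZ X (r-1)),
    show q - 1 + 1 = q by omega]
  ring

lemma phi_diag (p q : ℕ) (hp : 1 ≤ p) (hq : p ≤ q) : Phi X p p q = (X p q : ℤ) := by
  induction q with
  | zero => omega
  | succ q ih =>
    rcases Nat.eq_or_lt_of_le hq with h | h
    · rw [← h, phi_base p p hp, SZ_diag X p hp]
    · rw [phi_succ p p q hp (by omega), ih (by omega),
        SZ_eq X p (q+1) hp (by omega), show q + 1 - 1 = q by omega]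
      ring

include hA hB hC hD in
lemma phi_mono (s a q : ℕ) (hs : s + 1 ≤ a) (haq : a ≤ q) (hq : q ≤ n) :
    Phi X s a q ≤ Phi X (s+1) a q := by
  induction q with
  | zero => omega
  | succ q ih =>
    rcases Nat.eq_or_lt_of_le haq with h | h
    · rw [← h, phi_base s a (by omega), phi_base (s+1) a (by omega)]
      have h5 := c_nonneg hA hB hC hD (s+1) a (by omega) hs (by omega)
      rw [cZ, show s + 1 - 1 = s by omega] at h5
      linarith
    · have h1 := phi_succ (X := X) s a q (by omega) (by omega)
      have h2 := phi_succ (X := X) (s+1) a q (by omega) (by omega)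
      have h3 := c_step hB hD (s+1) (q+1) (by omega) (by omega) hq
      rw [show s + 1 - 1 = s by omega, show q + 1 - 1 = q by omega, cZ, cZ] at h3
      have h4 := ih (by omega) (by omega)
      rw [h1, h2]
      simp only [Nat.add_sub_cancel] at h3 ⊢
      linarith

include hA hB hC hD in
lemma phi_mono' (s s' a q : ℕ) (hss : s ≤ s') (hs : s' ≤ a) (haq : a ≤ q) (hq : q ≤ n) :
    Phi X s a q ≤ Phi X s' a q := by
  induction s' with
  | zero => rw [show s = 0 by omega]
  | succ s' ih =>
    rcases Nat.eq_or_lt_of_le hss with h | h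
    · rw [h]
    · calc Phi X s a q ≤ Phi X s' a q := ih (by omega) (by omega)
        _ ≤ Phi X (s'+1) a q := phi_mono hA hB hC hD s' a q hs haq hq

include hB hD in
lemma key1 (r a hi q : ℕ) (hr : 1 ≤ r) (hra : r ≤ a) (hahi : a ≤ hi) (hhq : hi ≤ q)
    (hq : q ≤ n) : NZ X r a hi + Phi X (r-1) hi q ≤ Phi X r a q := by
  induction q with
  | zero => omega
  | succ q ih =>
    rcases Nat.eq_or_lt_of_le hhq with h | h
    · -- base case : equality
      rw [← h]
      have : NZ X r a hi + Phi X (r-1) hi hi = Phi X r a hi := by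
        rw [phi_base (r-1) hi (by omega), NZ, Phi]
        have hsplit : (∑ v ∈ Finset.Icc a hi, SZ X (r-1) v) =
            (∑ v ∈ Finset.Icc a (hi-1), SZ X (r-1) v) + SZ X (r-1) hi := by
          rw [show hi = (hi-1)+1 by omega, Finset.sum_Icc_succ_top (by omega),
            show hi - 1 + 1 = hi by omega]
        simp only [cZ, Finset.sum_sub_distrib]
        rw [hsplit]
        ring
      rw [← this]
    · have h1 := phi_succ (X := X) r a q (by omega) (by omega)
      have h2 := phi_succ (X := X) (r-1) hi q (by omega) (by omega)
      have h3 := c_step hB hD r (q+1) hr (by omega) hq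
      rw [show q + 1 - 1 = q by omega, cZ, cZ] at h3
      have h4 := ih (by omega) (by omega)
      rw [h1, h2]
      linarith [h3, h4]

include hC in
lemma X_anti (a r q : ℕ) (ha : 1 ≤ a) (har : a ≤ r) (hrq : r ≤ q) (hq : q ≤ n) :
    X r q ≤ X a q := by
  induction r with
  | zero => omega
  | succ r ih =>
    rcases Nat.eq_or_lt_of_le har with h | h
    · rw [h]
    · calc X (r+1) q ≤ X r q := by
            have := hC (r+1) q (by omega) hrq hq
            simpa using this
        _ ≤ X a q := ih (by omega) (by omega)

include hA hB hC hD in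
lemma key (r a hi q : ℕ) (hr : 1 ≤ r) (ha : 1 ≤ a) (hahi : a ≤ hi) (hhq : hi ≤ q)
    (hq : q ≤ n) :
    NZ X r (max a r) hi + Phi X (min (r-1) hi) hi q ≤ Phi X (min r a) a q := by
  rcases le_or_gt r a with hcase | hcase
  · -- r ≤ a
    rw [max_eq_left hcase, min_eq_left (by omega), min_eq_left hcase]
    exact key1 hB hD r a hi q hr hcase hahi hhq hq
  · rcases le_or_gt r hi with hcase2 | hcase2
    · -- a < r ≤ hi
      rw [max_eq_right (by omega), min_eq_left (by omega), min_eq_right (by omega)]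
      have k1 := key1 hB hD r r hi q hr le_rfl hcase2 hhq hq
      have e1 : Phi X r r q = (X r q : ℤ) := phi_diag r q hr (by omega)
      have e2 : Phi X a a q = (X a q : ℤ) := phi_diag a q ha (by omega)
      have e3 : X r q ≤ X a q := X_anti hC a r q ha (by omega) (by omega) hq
      rw [e2]
      calc NZ X r r hi + Phi X (r-1) hi q ≤ Phi X r r q := k1
        _ = (X r q : ℤ) := e1
        _ ≤ (X a q : ℤ) := by exact_mod_cast e3
    · -- hi < r
      rw [max_eq_right (by omega), min_eq_right (by omega), min_eq_right (by omega)]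
      have e0 : NZ X r r hi = 0 := by
        rw [NZ, Finset.Icc_eq_empty (by omega), Finset.sum_empty]
      rw [e0, zero_add]
      have e1 : Phi X hi hi q = (X hi q : ℤ) := phi_diag hi q (by omega) hhq
      have e2 : Phi X a a q = (X a q : ℤ) := phi_diag a q ha (by omega)
      have e3 : X hi q ≤ X a q := X_anti hC a hi q ha hahi hhq hq
      rw [e1, e2]
      exact_mod_cast e3

include hA hB hC in
lemma lower_id (p q : ℕ) (hp : 1 ≤ p) (hq : p ≤ q) :
    (∑ v ∈ Finset.Icc p q, cZ X p v) + (∑ r ∈ Finset.Icc 1 (p-1), cZ X r q)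
      = (X p q : ℤ) := by
  have h1 : Phi X p p q = (X p q : ℤ) := phi_diag p q hp hq
  rw [← h1, Phi]
  rw [← SZ_tel X (p-1) q]
  have hsplit : (∑ v ∈ Finset.Icc p q, SZ X (p-1) v) =
      (∑ v ∈ Finset.Icc p (q-1), SZ X (p-1) v) + SZ X (p-1) q := by
    rw [show q = (q-1)+1 by omega, Finset.sum_Icc_succ_top (by omega),
      show q - 1 + 1 = q by omega]
  simp only [cZ, Finset.sum_sub_distrib]
  rw [hsplit]
  ring

lemma colId (r v : ℕ) (hr : 1 ≤ r) (hv : r + 1 ≤ v) (hn : v ≤ n) :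
    NZ X (r+1) (r+1) v + (X r v : ℤ) = NZ X r r (v-1) + (X (r+1) v : ℤ) := by
  induction v with
  | zero => omega
  | succ v ih =>
    rcases Nat.eq_or_lt_of_le hv with h | h
    · rw [← h]
      simp only [NZ, show r + 1 - 1 = r by omega, Finset.Icc_self, Finset.sum_singleton]
      rw [cZ_diag_eq (v := r+1) (by omega), cZ_diag_eq (v := r) (by omega),
        show r + 1 - 1 = r by omega, show r = (r-1)+1 by omega,
        Finset.sum_Icc_succ_top (by omega), show r - 1 + 1 = r by omega]
      push_cast
      ring
    · have ihh := ih (by omega) (by omega)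
      have e1 : NZ X (r+1) (r+1) (v+1) = NZ X (r+1) (r+1) v + cZ X (r+1) (v+1) := by
        rw [NZ, NZ, Finset.sum_Icc_succ_top (by omega)]
      have e2 : NZ X r r (v+1-1) = NZ X r r (v-1) + cZ X r v := by
        rw [show v + 1 - 1 = v by omega, NZ, NZ, show v = (v-1)+1 by omega,
          Finset.sum_Icc_succ_top (by omega), show v - 1 + 1 = v by omega]
      have e3 : cZ X (r+1) (v+1) =
          ((X (r+1) (v+1) : ℤ) - X (r+1) v - X r (v+1) + X r v) + cZ X r v := by
        have := cZ_rec X (r+1) (v+1) (by omega) (by omega)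
        rw [show r + 1 - 1 = r by omega, show v + 1 - 1 = v by omega] at this
        exact this
      rw [e1, e2, e3]
      linarith

end Ineq

section Lists

-- sum over range'
lemma list_sum_range' (f : ℕ → ℕ) (a k : ℕ) :
    ((List.range' a k).map f).sum = ∑ v ∈ Finset.Ico a (a+k), f v := by
  induction k with
  | zero => simp
  | succ k ih =>
    rw [List.range'_concat, List.map_append, List.sum_append, ih,
      show a + (k+1) = (a+k)+1 by omega, Finset.sum_Ico_succ_top (by omega)]
    simp

variable (X : ℕ → ℕ → ℕ) (n : ℕ)

def rowL (r : ℕ) : List ℕ :=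
  ((List.range' r (n+1-r)).map (fun v => List.replicate (cN X r v) v)).flatten

def desc (k : ℕ) : List ℕ := (List.range' 1 k).reverse

lemma desc_succ (k : ℕ) : desc (k+1) = (k+1) :: desc k := by
  rw [desc, List.range'_concat, List.reverse_append]
  simp only [List.reverse_cons, List.reverse_nil, List.nil_append, List.singleton_append]
  rw [show 1 + 1 * k = k + 1 by omega]
  rfl

lemma desc_sum (f : ℕ → ℕ) (k : ℕ) :
    ((desc k).map f).sum = ∑ r ∈ Finset.Icc 1 k, f r := by
  rw [desc, List.map_reverse, List.sum_reverse, list_sum_range',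
    show 1 + k = k + 1 by omega, Finset.Ico_add_one_right_eq_Icc]

-- membership in blocks
lemma mem_blocks (m : ℕ → ℕ) (a k x : ℕ)
    (hx : x ∈ ((List.range' a k).map (fun v => List.replicate (m v) v)).flatten) :
    a ≤ x ∧ x < a + k := by
  simp only [List.mem_flatten, List.mem_map] at hx
  obtain ⟨l, ⟨v, hv, rfl⟩, hxl⟩ := hx
  rw [List.eq_of_mem_replicate hxl]
  rw [List.mem_range'_1] at hv
  omega

lemma mem_rowL (r x : ℕ) (hx : x ∈ rowL X n r) : r ≤ x ∧ x ≤ n := by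
  have := mem_blocks (cN X r) r (n+1-r) x hx
  rcases this with ⟨h1, h2⟩
  constructor
  · exact h1
  · omega

-- constant lists are sorted
lemma sorted_const (l : List ℕ) (q : ℕ) (h : ∀ x ∈ l, x = q) : List.Pairwise (· ≤ ·) l := by
  induction l with
  | nil => simp
  | cons a l ih =>
    rw [List.pairwise_cons]
    refine ⟨fun b hb => ?_, ih fun x hx => h x (by simp [hx])⟩
    rw [h a (by simp), h b (by simp [hb])]

lemma sorted_blocks (m : ℕ → ℕ) (a k : ℕ) :
    List.Pairwise (· ≤ ·) (((List.range' a k).map (fun v => List.replicate (m v) v)).flatten) := by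
  induction k generalizing a with
  | zero => simp
  | succ k ih =>
    rw [List.range'_succ, List.map_cons, List.flatten_cons]
    rw [List.pairwise_append]
    refine ⟨?_, ih (a+1), ?_⟩
    · exact List.pairwise_replicate.mpr (Or.inr le_rfl)
    · intro x hx y hy
      rw [List.eq_of_mem_replicate hx]
      have := mem_blocks m (a+1) k y hy
      omega

lemma sorted_rowL (r : ℕ) : List.Pairwise (· ≤ ·) (rowL X n r) :=
  sorted_blocks (cN X r) r (n+1-r)

-- length of filtered row
lemma rowL_filter_length (p : ℕ → Bool) (r : ℕ) :
    ((rowL X n r).filter p).length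
      = ∑ v ∈ (Finset.Ico r (n+1)).filter (fun v => p v), cN X r v := by
  rw [rowL, List.filter_flatten, List.map_map, List.length_flatten, List.map_map]
  have hmapeq : (List.map (List.length ∘ List.filter p ∘ fun v => List.replicate (cN X r v) v)
      (List.range' r (n+1-r)))
      = (List.range' r (n+1-r)).map (fun v => if p v then cN X r v else 0) := by
    apply List.map_congr_left
    intro v _
    simp only [Function.comp_apply, List.filter_replicate]
    by_cases h : p v <;> simp [h]
  rw [hmapeq, list_sum_range' (fun v => if p v then cN X r v else 0) r (n+1-r)]
  rw [Finset.sum_filter]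
  apply Finset.sum_congr _ (fun _ _ => rfl)
  ext v
  simp only [Finset.mem_Ico]
  omega

lemma rowL_length (r : ℕ) :
    (rowL X n r).length = ∑ v ∈ Finset.Icc r n, cN X r v := by
  have h := rowL_filter_length X n (fun _ => true) r
  simp only [List.filter_true, Finset.filter_true] at h
  rw [h, Finset.Ico_add_one_right_eq_Icc]


-- sublist of flatten
lemma flatten_sub (f g : ℕ → List ℕ) (l : List ℕ) (h : ∀ r ∈ l, (g r).Sublist (f r)) :
    ((l.map g).flatten).Sublist ((l.map f).flatten) := by
  induction l with
  | nil => simp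
  | cons a l ih =>
    simp only [List.map_cons, List.flatten_cons]
    exact (h a (by simp)).append (ih fun r hr => h r (by simp [hr]))

-- sorted element vs getLast
lemma le_getLast_of_sorted (l : List ℕ) (hl : List.Pairwise (· ≤ ·) l) (hne : l ≠ [])
    (x : ℕ) (hx : x ∈ l) : x ≤ l.getLast hne := by
  obtain ⟨i, hi, rfl⟩ := List.mem_iff_getElem.mp hx
  rw [List.getLast_eq_getElem]
  have hi1 : i ≤ l.length - 1 := by omega
  rcases Nat.eq_or_lt_of_le hi1 with h | h
  · subst h; exact le_rfl
  · exact (List.pairwise_iff_getElem.mp hl) i (l.length - 1) hi (by omega) h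

-- the positional column lemma
lemma getD_lt_of_counts (L M : List ℕ) (hL : List.Pairwise (· ≤ ·) L)
    (hM : List.Pairwise (· ≤ ·) M)
    (h : ∀ v, ((M.filter (fun x => decide (x ≤ v))).length
        ≤ (L.filter (fun x => decide (x < v))).length)) :
    ∀ j < M.length, L.getD j 0 < M.getD j 0 := by
  intro j hj
  set b := M.getD j 0 with hb
  have hbj : b = M[j] := by rw [hb, List.getD_eq_getElem M 0 hj]
  have h1 : (M.take (j+1)).filter (fun x => decide (x ≤ b)) = M.take (j+1) := by
    apply List.filter_eq_self.mpr
    intro x hx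
    obtain ⟨i, hi, rfl⟩ := List.mem_iff_getElem.mp hx
    rw [List.getElem_take]
    have hi' : i < j + 1 := by
      have := List.length_take_le (j+1) M; omega
    have hij : (M.take (j+1)).length ≤ j + 1 := List.length_take_le (j+1) M
    simp only [decide_eq_true_eq]
    rcases Nat.eq_or_lt_of_le (Nat.le_of_lt_succ hi') with hh | hh
    · subst hh; exact hbj.ge
    · rw [hbj]
      exact (List.pairwise_iff_getElem.mp hM) i j (by omega) hj hh
  have h2 : j + 1 ≤ (M.filter (fun x => decide (x ≤ b))).length := by
    have hsub : ((M.take (j+1)).filter (fun x => decide (x ≤ b))).Sublist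
        (M.filter (fun x => decide (x ≤ b))) :=
      List.Sublist.filter (fun x => decide (x ≤ b)) (List.take_sublist (j+1) M)
    have hlen := hsub.length_le
    rw [h1, List.length_take] at hlen
    omega
  have h3 : j + 1 ≤ (L.filter (fun x => decide (x < b))).length :=
    le_trans h2 (h b)
  have hjL : j < L.length := by
    have := List.length_filter_le (fun x => decide (x < b)) L
    omega
  by_contra hcon
  push_neg at hcon
  -- b ≤ L.getD j 0 = L[j]
  have hLj : b ≤ L[j] := by
    rw [List.getD_eq_getElem L 0 hjL] at hcon
    exact hcon
  have h4 : (L.drop j).filter (fun x => decide (x < b)) = [] := by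
    rw [List.filter_eq_nil_iff]
    intro x hx
    obtain ⟨i, hi, rfl⟩ := List.mem_iff_getElem.mp hx
    have hld : (L.drop j).length = L.length - j := List.length_drop
    have hji : j + i < L.length := by omega
    rw [List.getElem_drop]
    simp only [decide_eq_true_eq, not_lt]
    rcases Nat.eq_zero_or_pos i with h0 | h0
    · subst h0; simpa using hLj
    · calc b ≤ L[j] := hLj
        _ ≤ L[j+i] := (List.pairwise_iff_getElem.mp hL) j (j+i) hjL (by omega) (by omega)
  have h5 : (L.filter (fun x => decide (x < b))).length ≤ j := by
    conv_lhs => rw [← List.take_append_drop j L]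
    rw [List.filter_append, List.length_append, h4]
    simp only [List.length_nil, add_zero]
    calc ((L.take j).filter (fun x => decide (x < b))).length
        ≤ (L.take j).length := List.length_filter_le _ _
      _ ≤ j := List.length_take_le j L
  omega

end Lists

section Constr
variable {n : ℕ} {X : ℕ → ℕ → ℕ}
variable (hA : ∑ i ∈ Finset.Icc 1 (n - 1), X i (i + 1) ≤ ∑ i ∈ Finset.Icc 1 n, X i i)
variable (hB : ∀ i j, 1 ≤ i → i ≤ j → j < n → X i j ≤ X i (j + 1))
variable (hC : ∀ i j, 1 < i → i ≤ j → j ≤ n → X i j ≤ X (i - 1) j)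
variable (hD : ∀ i j, 1 ≤ i → i < j → j < n →
      X i (j + 1) + X (i + 1) j ≤ X i j + X (i + 1) (j + 1))

include hA hB hC hD in
lemma sum_cN_cast (r a b : ℕ) (hr : r ≤ a) (hr1 : 1 ≤ r) (hb : b ≤ n) :
    ((∑ w ∈ Finset.Icc a b, cN X r w : ℕ) : ℤ) = NZ X r a b := by
  rw [Nat.cast_sum, NZ]
  apply Finset.sum_congr rfl
  intro w hw
  rw [Finset.mem_Icc] at hw
  exact cN_cast hA hB hC hD r w hr1 (by omega) (by omega)

include hA hB hC hD in
lemma colLe (r v : ℕ) (hr : 1 ≤ r) (hrn : r + 1 ≤ n) :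
    ((rowL X n (r+1)).filter (fun x => decide (x ≤ v))).length
      ≤ ((rowL X n r).filter (fun x => decide (x < v))).length := by
  rw [rowL_filter_length, rowL_filter_length]
  have e1 : (Finset.Ico (r+1) (n+1)).filter (fun w => (decide (w ≤ v) : Bool))
      = Finset.Icc (r+1) (min v n) := by
    ext w
    simp only [Finset.mem_filter, Finset.mem_Ico, Finset.mem_Icc, decide_eq_true_eq]
    omega
  have e2 : (Finset.Ico r (n+1)).filter (fun w => (decide (w < v) : Bool))
      = Finset.Icc r (min (v-1) n) := by
    ext w
    simp only [Finset.mem_filter, Finset.mem_Ico, Finset.mem_Icc, decide_eq_true_eq]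
    omega
  rw [e1, e2]
  by_cases hcase : r + 1 ≤ min v n
  · have hid := colId (X := X) (n := n) r (min v n) hr hcase (by omega)
    have hcc : X (r+1) (min v n) ≤ X r (min v n) := by
      have := hC (r+1) (min v n) (by omega) (by omega) (by omega)
      simpa using this
    have hcc' : (X (r+1) (min v n) : ℤ) ≤ X r (min v n) := by exact_mod_cast hcc
    have h1 : NZ X (r+1) (r+1) (min v n) ≤ NZ X r r (min v n - 1) := by linarith
    have h2 : NZ X r r (min v n - 1) ≤ NZ X r r (min (v-1) n) := by
      apply Finset.sum_le_sum_of_subset_of_nonneg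
      · apply Finset.Icc_subset_Icc_right; omega
      · intro w hw _
        rw [Finset.mem_Icc] at hw
        exact c_nonneg (n := n) hA hB hC hD r w hr (by omega) (by omega)
    have c1 := sum_cN_cast hA hB hC hD (r+1) (r+1) (min v n) le_rfl (by omega) (by omega)
    have c2 := sum_cN_cast hA hB hC hD r r (min (v-1) n) le_rfl hr (by omega)
    have : ((∑ w ∈ Finset.Icc (r+1) (min v n), cN X (r+1) w : ℕ) : ℤ)
        ≤ ((∑ w ∈ Finset.Icc r (min (v-1) n), cN X r w : ℕ) : ℤ) := by
      rw [c1, c2]; linarith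
    exact_mod_cast this
  · rw [Finset.Icc_eq_empty (by omega), Finset.sum_empty]
    exact Nat.zero_le _

include hA hB hC hD in
lemma shapeLe (r : ℕ) (hr : 1 ≤ r) (hrn : r + 1 ≤ n) :
    (rowL X n (r+1)).length ≤ (rowL X n r).length := by
  have h := colLe hA hB hC hD r (n+1) hr hrn
  have e1 : (rowL X n (r+1)).filter (fun x => decide (x ≤ n+1)) = rowL X n (r+1) := by
    apply List.filter_eq_self.mpr
    intro x hx
    have := mem_rowL X n (r+1) x hx
    simp only [decide_eq_true_eq]
    omega
  rw [e1] at h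
  exact le_trans h (List.length_filter_le _ _)

def tabRows : List (List ℕ) := (List.range' 1 n).map (rowL X n)

lemma tabRows_getD (i : ℕ) (hi : i < n) : (tabRows (X := X) (n := n)).getD i [] = rowL X n (1+i) := by
  rw [tabRows, List.getD_eq_getElem _ _ (by simpa using hi), List.getElem_map,
    List.getElem_range']
  rw [one_mul]

lemma tabRows_getD' (i : ℕ) (hi : n ≤ i) : (tabRows (X := X) (n := n)).getD i [] = [] := by
  apply List.getD_eq_default
  rw [tabRows]
  simpa using hi

def tab : Tableau n where
  rows := tabRows (X := X) (n := n)
  entries_mem := by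
    intro r hr x hx
    rw [tabRows, List.mem_map] at hr
    obtain ⟨v, hv, rfl⟩ := hr
    rw [List.mem_range'_1] at hv
    have := mem_rowL X n v x hx
    rw [Finset.mem_Icc]
    omega
  row_weak := by
    intro r hr
    rw [tabRows, List.mem_map] at hr
    obtain ⟨v, hv, rfl⟩ := hr
    exact sorted_rowL X n v
  shape := by
    intro i
    rcases le_or_gt n (i+1) with h | h
    · rw [tabRows_getD' (i+1) h]
      simp
    · rw [tabRows_getD (i+1) h, tabRows_getD i (by omega)]
      have := shapeLe hA hB hC hD (1+i) (by omega) (by omega)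
      rw [show 1 + (i+1) = (1+i) + 1 by omega]
      exact this
  col_strict := by
    intro i j hj
    rcases le_or_gt n (i+1) with h | h
    · rw [tabRows_getD' (i+1) h] at hj
      simp at hj
    · rw [tabRows_getD (i+1) h] at hj ⊢
      rw [tabRows_getD i (by omega)]
      apply getD_lt_of_counts _ _ (sorted_rowL X n (1+i)) (sorted_rowL X n (1+(i+1)))
        _ j hj
      intro v
      have := colLe hA hB hC hD (1+i) v (by omega) (by omega)
      rw [show 1 + (i+1) = (1+i) + 1 by omega]
      exact this

lemma rowReading_tab : rowReading (tab hA hB hC hD) = ((desc n).map (rowL X n)).flatten := by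
  show ((tabRows (X := X) (n := n)).reverse).flatten = _
  rw [tabRows, ← List.map_reverse]
  rfl

end Constr

section Final
variable {n : ℕ} {X : ℕ → ℕ → ℕ}
variable (hA : ∑ i ∈ Finset.Icc 1 (n - 1), X i (i + 1) ≤ ∑ i ∈ Finset.Icc 1 n, X i i)
variable (hB : ∀ i j, 1 ≤ i → i ≤ j → j < n → X i j ≤ X i (j + 1))
variable (hC : ∀ i j, 1 < i → i ≤ j → j ≤ n → X i j ≤ X (i - 1) j)
variable (hD : ∀ i j, 1 ≤ i → i < j → j < n →
      X i (j + 1) + X (i + 1) j ≤ X i j + X (i + 1) (j + 1))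

lemma qcount (r q : ℕ) (hr : 1 ≤ r) (hrq : r ≤ q) (hq : q ≤ n) :
    ((rowL X n r).filter (fun x => decide (x = q))).length = cN X r q := by
  rw [rowL_filter_length]
  have e : (Finset.Ico r (n+1)).filter (fun w => (decide (w = q) : Bool)) = {q} := by
    ext w
    simp only [Finset.mem_filter, Finset.mem_Ico, Finset.mem_singleton, decide_eq_true_eq]
    omega
  rw [e, Finset.sum_singleton]

include hA hB hC hD in
lemma existsWitness (p q : ℕ) (hp : 1 ≤ p) (hpq : p ≤ q) (hq : q ≤ n) :
    ∃ u : List ℕ, u.Sublist (((desc n).map (rowL X n)).flatten) ∧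
      List.Pairwise (· ≤ ·) u ∧ (∀ x ∈ u, x ∈ Finset.Icc p q) ∧ u.length = X p q := by
  set u₀ := (rowL X n p).filter (fun x => decide (p ≤ x) && decide (x ≤ q)) with hu₀
  set u₁ := ((desc (p-1)).map
      (fun r => (rowL X n r).filter (fun x => decide (x = q)))).flatten with hu₁
  have hmem₀ : ∀ x ∈ u₀, p ≤ x ∧ x ≤ q := by
    intro x hx
    rw [hu₀, List.mem_filter] at hx
    rcases hx with ⟨_, hpred⟩
    simp only [Bool.and_eq_true, decide_eq_true_eq] at hpred
    exact hpred
  have hmem₁ : ∀ x ∈ u₁, x = q := by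
    intro x hx
    rw [hu₁, List.mem_flatten] at hx
    obtain ⟨l, hl, hxl⟩ := hx
    rw [List.mem_map] at hl
    obtain ⟨r, _, rfl⟩ := hl
    rw [List.mem_filter] at hxl
    simpa using hxl.2
  refine ⟨u₀ ++ u₁, ?_, ?_, ?_, ?_⟩
  · -- sublist
    have h := List.range'_append (s := 1) (m := p) (n := n-p) (step := 1)
    rw [one_mul, show p+(n-p) = n by omega] at h
    have hdp := desc_succ (p-1)
    rw [show p - 1 + 1 = p by omega] at hdp
    have hdesc : desc n = (List.range' (1+p) (n-p)).reverse ++ (p :: desc (p-1)) := by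
      rw [desc, ← h, List.reverse_append, ← hdp]
      rfl
    rw [hdesc, List.map_append, List.flatten_append, List.map_cons, List.flatten_cons]
    have s1 : u₀.Sublist (rowL X n p) := List.filter_sublist
    have s2 : u₁.Sublist (((desc (p-1)).map (rowL X n)).flatten) :=
      flatten_sub (rowL X n) _ _ (fun r _ => List.filter_sublist)
    simpa using (List.nil_sublist
        (((List.range' (1+p) (n-p)).reverse).map (rowL X n)).flatten).append (s1.append s2)
  · -- sorted
    apply List.pairwise_append.mpr
    refine ⟨(sorted_rowL X n p).filter _, sorted_const _ q hmem₁, ?_⟩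
    intro a ha b hb
    rw [hmem₁ b hb]
    exact (hmem₀ a ha).2
  · intro x hx
    rw [Finset.mem_Icc]
    rcases List.mem_append.mp hx with h | h
    · exact hmem₀ x h
    · rw [hmem₁ x h]; omega
  · rw [List.length_append]
    have l0 : u₀.length = ∑ w ∈ Finset.Icc p q, cN X p w := by
      rw [hu₀, rowL_filter_length]
      congr 1
      ext w
      simp only [Finset.mem_filter, Finset.mem_Ico, Finset.mem_Icc, Bool.and_eq_true,
        decide_eq_true_eq]
      omega
    have l1 : u₁.length = ∑ r ∈ Finset.Icc 1 (p-1), cN X r q := by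
      rw [hu₁, List.length_flatten, List.map_map]
      rw [show (List.length ∘ fun r => (rowL X n r).filter (fun x => decide (x = q)))
        = (fun r => ((rowL X n r).filter (fun x => decide (x = q))).length) from rfl]
      rw [desc_sum]
      apply Finset.sum_congr rfl
      intro r hr
      rw [Finset.mem_Icc] at hr
      exact qcount r q (by omega) (by omega) hq
    rw [l0, l1]
    have hid := lower_id (X := X) (n := n) hA hB hC p q hp hpq
    have c1 := sum_cN_cast hA hB hC hD p p q le_rfl hp hq
    have c2 : ((∑ r ∈ Finset.Icc 1 (p-1), cN X r q : ℕ) : ℤ)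
        = ∑ r ∈ Finset.Icc 1 (p-1), cZ X r q := by
      rw [Nat.cast_sum]
      apply Finset.sum_congr rfl
      intro r hr
      rw [Finset.mem_Icc] at hr
      exact cN_cast hA hB hC hD r q (by omega) (by omega) hq
    have : (((∑ w ∈ Finset.Icc p q, cN X p w) + ∑ r ∈ Finset.Icc 1 (p-1), cN X r q : ℕ) : ℤ)
        = (X p q : ℤ) := by
      rw [Nat.cast_add, c1, c2]
      unfold NZ
      exact hid
    exact_mod_cast this

include hA hB hC hD in
lemma ubMain (q : ℕ) (hq : q ≤ n) :
    ∀ R a (u : List ℕ), 1 ≤ a → a ≤ q →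
      u.Sublist (((desc R).map (rowL X n)).flatten) → List.Pairwise (· ≤ ·) u →
      (∀ x ∈ u, a ≤ x ∧ x ≤ q) → (u.length : ℤ) ≤ Phi X (min R a) a q := by
  intro R
  induction R with
  | zero =>
    intro a u ha haq hsub _ _
    have : u = [] := List.sublist_nil.mp (by simpa [desc] using hsub)
    subst this
    simp [phi_zero]
  | succ R ih =>
    intro a u ha haq hsub hsort hmem
    rw [desc_succ, List.map_cons, List.flatten_cons] at hsub
    obtain ⟨u₀, u₁, rfl, hsub₀, hsub₁⟩ := List.sublist_append_iff.mp hsub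
    rw [List.pairwise_append] at hsort
    obtain ⟨hs₀, hs₁, hcross⟩ := hsort
    by_cases h0 : u₀ = []
    · subst h0
      simp only [List.nil_append] at hmem ⊢
      have step := ih a u₁ ha haq hsub₁ hs₁ hmem
      exact le_trans step (phi_mono' hA hB hC hD (min R a) (min (R+1) a) a q
        (by omega) (by omega) haq hq)
    · set hi := u₀.getLast h0 with hhi
      have hhi_mem : hi ∈ u₀ := List.getLast_mem h0
      obtain ⟨hahi, hhiq⟩ := hmem hi (List.mem_append_left _ hhi_mem)
      have hmem₀ : ∀ x ∈ u₀, a ≤ x ∧ x ≤ hi := fun x hx =>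
        ⟨(hmem x (List.mem_append_left _ hx)).1, le_getLast_of_sorted u₀ hs₀ h0 x hx⟩
      have hmem₁ : ∀ x ∈ u₁, hi ≤ x ∧ x ≤ q := fun x hx =>
        ⟨hcross hi hhi_mem x hx, (hmem x (List.mem_append_right _ hx)).2⟩
      have hu₀eq : u₀.filter (fun x => decide (a ≤ x) && decide (x ≤ hi)) = u₀ :=
        List.filter_eq_self.mpr (fun x hx => by
          have := hmem₀ x hx
          simp only [Bool.and_eq_true, decide_eq_true_eq]
          exact this)
      have hlen₀ : (u₀.length : ℤ) ≤ NZ X (R+1) (max a (R+1)) hi := by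
        have hf := hsub₀.filter (fun x => decide (a ≤ x) && decide (x ≤ hi))
        have hl := hf.length_le
        rw [hu₀eq, rowL_filter_length] at hl
        have e : (Finset.Ico (R+1) (n+1)).filter
            (fun w => (decide (a ≤ w) && decide (w ≤ hi) : Bool))
            = Finset.Icc (max a (R+1)) hi := by
          ext w
          simp only [Finset.mem_filter, Finset.mem_Ico, Finset.mem_Icc, Bool.and_eq_true,
            decide_eq_true_eq]
          omega
        rw [e] at hl
        calc (u₀.length : ℤ)
            ≤ ((∑ w ∈ Finset.Icc (max a (R+1)) hi, cN X (R+1) w : ℕ) : ℤ) := by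
              exact_mod_cast hl
          _ = NZ X (R+1) (max a (R+1)) hi :=
              sum_cN_cast hA hB hC hD (R+1) (max a (R+1)) hi (le_max_right _ _)
                (by omega) (by omega)
      have hlen₁ : (u₁.length : ℤ) ≤ Phi X (min R hi) hi q :=
        ih hi u₁ (by omega) hhiq hsub₁ hs₁ hmem₁
      have hkey := key hA hB hC hD (R+1) a hi q (by omega) ha hahi hhiq hq
      rw [show R + 1 - 1 = R by omega] at hkey
      rw [List.length_append]
      push_cast
      linarith

end Final
/-- let `X` be an `n × n` upper triangular matrix with nonnegative
integer entries on and above the diagonal (recorded here as `X : ℕ → ℕ → ℕ`,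
1-indexed) satisfying conditions (A)–(D). Then `X = ρ(T)` for some semistandard
tableau `T` over `{1,…,n}`, where `ρ(T)_{p,q}` is the maximum length of a weakly
non-decreasing scattered subword of the word of `T` with letters in `{p,…,q}`. -/
theorem stmt16 (n : ℕ) (X : ℕ → ℕ → ℕ)
    (hA : ∑ i ∈ Finset.Icc 1 (n - 1), X i (i + 1) ≤ ∑ i ∈ Finset.Icc 1 n, X i i)
    (hB : ∀ i j, 1 ≤ i → i ≤ j → j < n → X i j ≤ X i (j + 1))
    (hC : ∀ i j, 1 < i → i ≤ j → j ≤ n → X i j ≤ X (i - 1) j)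
    (hD : ∀ i j, 1 ≤ i → i < j → j < n →
      X i (j + 1) + X (i + 1) j ≤ X i j + X (i + 1) (j + 1)) :
    ∃ T : Tableau n, ∀ p q, 1 ≤ p → p ≤ q → q ≤ n →
      (∃ u : List ℕ, u.Sublist (rowReading T) ∧ List.Pairwise (· ≤ ·) u ∧
          (∀ x ∈ u, x ∈ Finset.Icc p q) ∧ u.length = X p q) ∧
      (∀ u : List ℕ, u.Sublist (rowReading T) → List.Pairwise (· ≤ ·) u →
          (∀ x ∈ u, x ∈ Finset.Icc p q) → u.length ≤ X p q) := by
  refine ⟨tab hA hB hC hD, ?_⟩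
  intro p q hp hpq hq
  constructor
  · obtain ⟨u, hsub, hsort, hmemIcc, hlen⟩ := existsWitness hA hB hC hD p q hp hpq hq
    exact ⟨u, by rw [rowReading_tab]; exact hsub, hsort, hmemIcc, hlen⟩
  · intro u hsub hsort hmemIcc
    rw [rowReading_tab] at hsub
    have hmem : ∀ x ∈ u, p ≤ x ∧ x ≤ q := fun x hx => Finset.mem_Icc.mp (hmemIcc x hx)
    have h := ubMain hA hB hC hD q hq n p u hp hpq hsub hsort hmem
    rw [min_eq_right (by omega : p ≤ n), phi_diag p q hp hpq] at h
    exact_mod_cast h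
end
end
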